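/- arXiv:1507.08212 — 6 statements merged into one kernel-verified Lean document; each statement's English description precedes it below -/
import Mathlib

section
/- Let G be a finite simple graph. Then G is the unique labeled realization of its neighborhood degree list (i.e., every simple graph H on the same vertex set with NDL_H(v) = NDL_G(v) for all vertices v satisfies H = G) if and only if G admits no N-switch, i.e., there do not exist pairwise distinct vertices a, b, c, d of G with ac and bd edges, ad and bc non-edges, deg_G(a) = deg_G(b), and deg_G(c) = deg_G(d). -/
open Finset

section Aux

variable {V : Type*}

/-- Unipartite uniqueness lemma. -/
lemma aux_uni [DecidableEq V] :
    ∀ (D : Finset V) (A B : V → Finset V),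
    (∀ x ∈ D, A x ⊆ D) → (∀ x ∈ D, B x ⊆ D) →
    (∀ x ∈ D, x ∉ A x) → (∀ x ∈ D, x ∉ B x) →
    (∀ x ∈ D, ∀ y ∈ D, x ∈ A y → y ∈ A x) →
    (∀ x ∈ D, ∀ y ∈ D, x ∈ B y → y ∈ B x) →
    (∀ x ∈ D, (A x).card = (B x).card) →
    (∀ a ∈ D, ∀ b ∈ D, ∀ c d : V, a ≠ b → c ≠ d → c ≠ b → d ≠ a →
        c ∈ A a → d ∈ A b → c ∉ A b → d ∉ A a → False) →
    ∀ x ∈ D, A x = B x := by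
  intro D
  induction D using Finset.strongInduction with
  | _ D ih =>
    intro A B hAD hBD hAir hBir hAsm hBsm hcard hns
    rcases D.eq_empty_or_nonempty with rfl | hne
    · intro x hx; exact absurd hx (notMem_empty x)
    obtain ⟨a, haD, hmax⟩ := D.exists_max_image (fun x => (A x).card) hne
    -- Step 1 : every other neighborhood, minus a, is inside A a
    have key : ∀ x ∈ D, (A x).erase a ⊆ A a := by
      intro x hxD
      rcases eq_or_ne x a with rfl | hxa
      · exact erase_subset _ _
      by_cases h1 : ∀ c ∈ A x, c ≠ a → c ∈ A a
      · intro y hy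
        exact h1 y (mem_of_mem_erase hy) (ne_of_mem_erase hy)
      push_neg at h1
      obtain ⟨c, hcAx, hca, hcAa⟩ := h1
      have h2 : A a ⊆ A x ∪ {x} := by
        by_contra h2
        have : ∃ d ∈ A a, d ∉ A x ∧ d ≠ x := by
          simp only [subset_iff, not_forall] at h2
          obtain ⟨d, hd1, hd2⟩ := h2
          simp only [mem_union, mem_singleton, not_or] at hd2
          exact ⟨d, hd1, hd2.1, hd2.2⟩
        obtain ⟨d, hdAa, hdAx, hdx⟩ := this
        exact hns x hxD a haD c d hxa (fun h => hdAx (h ▸ hcAx)) hca hdx hcAx hdAa hcAa hdAx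
      by_cases hxAa : x ∈ A a
      · have haAx : a ∈ A x := hAsm x hxD a haD hxAa
        have hsub : (A a).erase x ⊆ (A x).erase a := by
          intro y hy
          have hyAa := mem_of_mem_erase hy
          have hyx := ne_of_mem_erase hy
          have : y ∈ A x ∪ {x} := h2 hyAa
          rw [mem_union, mem_singleton] at this
          rcases this with h | h
          · exact mem_erase.2 ⟨fun hh => hAir a haD (hh ▸ hyAa), h⟩
          · exact absurd h hyx
        have hcards : ((A x).erase a).card ≤ ((A a).erase x).card := by
          rw [card_erase_of_mem haAx, card_erase_of_mem hxAa]
          exact Nat.sub_le_sub_right (hmax x hxD) 1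
        have := eq_of_subset_of_card_le hsub hcards
        rw [← this]
        exact erase_subset _ _
      · have hsub : A a ⊆ A x := by
          intro y hy
          have : y ∈ A x ∪ {x} := h2 hy
          rw [mem_union, mem_singleton] at this
          rcases this with h | h
          · exact h
          · exact absurd (h ▸ hy) hxAa
        have := eq_of_subset_of_card_le hsub (hmax x hxD)
        rw [← this]
        exact erase_subset _ _
    -- Step 2 : A a is exactly the set of x in D, x ≠ a, with nonempty A x
    have key2 : A a = D.filter (fun x => x ≠ a ∧ (A x).Nonempty) := by
      ext y
      simp only [mem_filter]
      constructor
      · intro hy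
        have hyD : y ∈ D := hAD a haD hy
        have hya : y ≠ a := fun h => hAir a haD (h ▸ hy)
        exact ⟨hyD, hya, ⟨a, hAsm y hyD a haD hy⟩⟩
      · rintro ⟨hyD, hya, z, hz⟩
        rcases eq_or_ne z a with hza | hza
        · rw [hza] at hz
          exact hAsm a haD y hyD hz
        · have hzD : z ∈ D := hAD y hyD hz
          have hyz : y ∈ A z := hAsm z hzD y hyD hz
          exact key z hzD (mem_erase.2 ⟨hya, hyz⟩)
    have hBa : B a = A a := by
      have hsub : B a ⊆ A a := by
        intro y hy
        rw [key2, mem_filter]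
        have hyD : y ∈ D := hBD a haD hy
        have hya : y ≠ a := fun h => hBir a haD (h ▸ hy)
        refine ⟨hyD, hya, ?_⟩
        rw [← card_pos, hcard y hyD, card_pos]
        exact ⟨a, hBsm y hyD a haD hy⟩
      exact eq_of_subset_of_card_le hsub (le_of_eq (hcard a haD))
    -- Step 3 : induction on D.erase a
    have hmemiff : ∀ x ∈ D, (a ∈ A x ↔ a ∈ B x) := by
      intro x hxD
      constructor
      · intro h
        have hxa' : x ∈ A a := hAsm a haD x hxD h
        rw [← hBa] at hxa'
        exact hBsm x hxD a haD hxa'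
      · intro h
        have hxa' : x ∈ B a := hBsm a haD x hxD h
        rw [hBa] at hxa'
        exact hAsm x hxD a haD hxa'
    have hD' : D.erase a ⊂ D := erase_ssubset haD
    have hrec := ih (D.erase a) hD' (fun x => (A x).erase a) (fun x => (B x).erase a)
      (by
        intro x hx y hy
        exact mem_erase.2 ⟨ne_of_mem_erase hy, hAD x (mem_of_mem_erase hx) (mem_of_mem_erase hy)⟩)
      (by
        intro x hx y hy
        exact mem_erase.2 ⟨ne_of_mem_erase hy, hBD x (mem_of_mem_erase hx) (mem_of_mem_erase hy)⟩)
      (fun x hx h => hAir x (mem_of_mem_erase hx) (mem_of_mem_erase h))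
      (fun x hx h => hBir x (mem_of_mem_erase hx) (mem_of_mem_erase h))
      (by
        intro x hx y hy h
        exact mem_erase.2 ⟨ne_of_mem_erase hy,
          hAsm x (mem_of_mem_erase hx) y (mem_of_mem_erase hy) (mem_of_mem_erase h)⟩)
      (by
        intro x hx y hy h
        exact mem_erase.2 ⟨ne_of_mem_erase hy,
          hBsm x (mem_of_mem_erase hx) y (mem_of_mem_erase hy) (mem_of_mem_erase h)⟩)
      (by
        intro x hx
        have hxD := mem_of_mem_erase hx
        show ((A x).erase a).card = ((B x).erase a).card
        by_cases h : a ∈ A x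
        · rw [card_erase_of_mem h, card_erase_of_mem ((hmemiff x hxD).1 h), hcard x hxD]
        · rw [erase_eq_of_notMem h, erase_eq_of_notMem (fun hh => h ((hmemiff x hxD).2 hh)),
            hcard x hxD])
      (by
        intro p hp q hq c d hpq hcd hcb hda hc hd hnc hnd
        exact hns p (mem_of_mem_erase hp) q (mem_of_mem_erase hq) c d hpq hcd hcb hda
          (mem_of_mem_erase hc) (mem_of_mem_erase hd)
          (fun h => hnc (mem_erase.2 ⟨ne_of_mem_erase hc, h⟩))
          (fun h => hnd (mem_erase.2 ⟨ne_of_mem_erase hd, h⟩)))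
    intro x hxD
    rcases eq_or_ne x a with rfl | hxa
    · exact hBa.symm
    have hx' : x ∈ D.erase a := mem_erase.2 ⟨hxa, hxD⟩
    have heq : (A x).erase a = (B x).erase a := hrec x hx'
    by_cases h : a ∈ A x
    · have hb : a ∈ B x := (hmemiff x hxD).1 h
      rw [← insert_erase h, ← insert_erase hb, heq]
    · rw [← erase_eq_of_notMem h, ← erase_eq_of_notMem (fun hh => h ((hmemiff x hxD).2 hh)), heq]

/-- Bipartite uniqueness lemma. -/
lemma aux_bip [DecidableEq V] :
    ∀ (R : Finset V) (A B : V → Finset V),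
    (∀ x ∈ R, (A x).card = (B x).card) →
    (∀ c : V, (R.filter (fun x => c ∈ A x)).card = (R.filter (fun x => c ∈ B x)).card) →
    (∀ a ∈ R, ∀ b ∈ R, A a ⊆ A b ∨ A b ⊆ A a) →
    ∀ x ∈ R, A x = B x := by
  intro R
  induction R using Finset.strongInduction with
  | _ R ih =>
    intro A B hrow hcol hchain
    rcases R.eq_empty_or_nonempty with rfl | hne
    · intro x hx; exact absurd hx (notMem_empty x)
    obtain ⟨a, haR, hmax⟩ := R.exists_max_image (fun x => (A x).card) hne
    have hsubA : ∀ x ∈ R, A x ⊆ A a := by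
      intro x hx
      rcases hchain x hx a haR with h | h
      · exact h
      · rw [eq_of_subset_of_card_le h (hmax x hx)]
    have hBa : B a = A a := by
      have hsub : B a ⊆ A a := by
        intro c hc
        have h1 : 0 < (R.filter (fun x => c ∈ B x)).card :=
          card_pos.2 ⟨a, mem_filter.2 ⟨haR, hc⟩⟩
        rw [← hcol c] at h1
        obtain ⟨x, hx⟩ := card_pos.1 h1
        rw [mem_filter] at hx
        exact hsubA x hx.1 hx.2
      exact eq_of_subset_of_card_le hsub (le_of_eq (hrow a haR))
    have hR' : R.erase a ⊂ R := erase_ssubset haR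
    have hrec := ih (R.erase a) hR' A B
      (fun x hx => hrow x (mem_of_mem_erase hx))
      (by
        intro c
        rw [filter_erase, filter_erase]
        by_cases h : c ∈ A a
        · have hb : c ∈ B a := hBa ▸ h
          have h1 : a ∈ R.filter (fun x => c ∈ A x) := mem_filter.2 ⟨haR, h⟩
          have h2 : a ∈ R.filter (fun x => c ∈ B x) := mem_filter.2 ⟨haR, hb⟩
          rw [card_erase_of_mem h1, card_erase_of_mem h2, hcol c]
        · have hb : c ∉ B a := fun hh => h (hBa ▸ hh)
          have h1 : a ∉ R.filter (fun x => c ∈ A x) := fun hh => h (mem_filter.1 hh).2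
          have h2 : a ∉ R.filter (fun x => c ∈ B x) := fun hh => hb (mem_filter.1 hh).2
          rw [erase_eq_of_notMem h1, erase_eq_of_notMem h2, hcol c])
      (fun x hx y hy => hchain x (mem_of_mem_erase hx) y (mem_of_mem_erase hy))
    intro x hxR
    rcases eq_or_ne x a with rfl | hxa
    · exact hBa.symm
    · exact hrec x (mem_erase.2 ⟨hxa, hxR⟩)

end Aux

/-- The degree of a vertex: the number of its neighbors. -/
noncomputable def deg {V : Type*} (G : SimpleGraph V) (v : V) : ℕ :=
  (G.neighborSet v).ncard

/-- The neighborhood degree list of a vertex `v`: the multiset of the degrees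
(in `G`) of the neighbors of `v`. -/
noncomputable def NDL {V : Type*} [Fintype V] (G : SimpleGraph V) (v : V) : Multiset ℕ :=
  ((G.neighborSet v).toFinite.toFinset).val.map (deg G)

section NDLAux

variable {V : Type*} [Fintype V]

lemma nbhd_eq [DecidableEq V] (G : SimpleGraph V) [DecidableRel G.Adj] (v : V) :
    (G.neighborSet v).toFinite.toFinset = Finset.univ.filter (fun u => G.Adj v u) := by
  ext u
  simp [Set.Finite.mem_toFinset]

lemma ndl_eq [DecidableEq V] (G : SimpleGraph V) [DecidableRel G.Adj] (v : V) :
    NDL G v = (Finset.univ.filter (fun u => G.Adj v u)).val.map (deg G) := by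
  rw [NDL, nbhd_eq]

lemma deg_eq [DecidableEq V] (G : SimpleGraph V) [DecidableRel G.Adj] (v : V) :
    deg G v = (Finset.univ.filter (fun u => G.Adj v u)).card := by
  rw [deg, Set.ncard_eq_toFinset_card _ (G.neighborSet v).toFinite, nbhd_eq]

lemma ndl_card (G : SimpleGraph V) (v : V) :
    (NDL G v).card = deg G v := by
  classical
  rw [ndl_eq, deg_eq, Multiset.card_map]
  rfl

lemma ndl_count [DecidableEq V] (G : SimpleGraph V) [DecidableRel G.Adj] (v : V) (j : ℕ) :
    Multiset.count j (NDL G v) =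
      (Finset.univ.filter (fun u => G.Adj v u ∧ deg G u = j)).card := by
  rw [ndl_eq, Multiset.count_map, ← Finset.filter_val]
  show (Finset.card _) = _
  rw [Finset.filter_filter]
  apply congrArg
  apply Finset.filter_congr
  intro u _
  simp [eq_comm]

lemma switch_map_step [DecidableEq V] {s : Finset V} {c d : V} (hc : c ∈ s)
    (hd : d ∉ s.erase c) (f : V → ℕ) (h : f c = f d) :
    (insert d (s.erase c)).val.map f = s.val.map f := by
  rw [Finset.insert_val_of_notMem hd, Finset.erase_val, Multiset.map_cons]
  conv_rhs => rw [← Multiset.cons_erase (show c ∈ s.val from hc), Multiset.map_cons, h]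

end NDLAux

set_option maxHeartbeats 2000000 in
/-- A finite simple graph is the unique labeled realization of its neighborhood
degree list iff it admits no N-switch. -/
theorem stmt9 {V : Type*} [Fintype V] (G : SimpleGraph V) :
    (∀ H : SimpleGraph V, (∀ v, NDL H v = NDL G v) → H = G) ↔
      ¬ ∃ a b c d : V, a ≠ b ∧ a ≠ c ∧ a ≠ d ∧ b ≠ c ∧ b ≠ d ∧ c ≠ d ∧
          G.Adj a c ∧ G.Adj b d ∧ ¬ G.Adj a d ∧ ¬ G.Adj b c ∧
          deg G a = deg G b ∧ deg G c = deg G d := by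
  classical
  constructor
  · -- uniqueness implies no N-switch
    rintro hU ⟨a, b, c, d, hab, hac, had, hbc, hbd, hcd, gac, gbd, gnad, gnbc, eab, ecd⟩
    have hsymm : ∀ x y : V,
        ((G.Adj x y ∧ ¬((x = a ∧ y = c) ∨ (x = c ∧ y = a) ∨ (x = b ∧ y = d) ∨ (x = d ∧ y = b)))
          ∨ ((x = a ∧ y = d) ∨ (x = d ∧ y = a) ∨ (x = b ∧ y = c) ∨ (x = c ∧ y = b))) →
        ((G.Adj y x ∧ ¬((y = a ∧ x = c) ∨ (y = c ∧ x = a) ∨ (y = b ∧ x = d) ∨ (y = d ∧ x = b)))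
          ∨ ((y = a ∧ x = d) ∨ (y = d ∧ x = a) ∨ (y = b ∧ x = c) ∨ (y = c ∧ x = b))) := by
      intro x y h
      rcases h with ⟨hg, hp⟩ | (⟨h1, h2⟩ | ⟨h1, h2⟩ | ⟨h1, h2⟩ | ⟨h1, h2⟩)
      · refine Or.inl ⟨hg.symm, ?_⟩
        rintro (⟨h1, h2⟩ | ⟨h1, h2⟩ | ⟨h1, h2⟩ | ⟨h1, h2⟩)
        · exact hp (Or.inr (Or.inl ⟨h2, h1⟩))
        · exact hp (Or.inl ⟨h2, h1⟩)
        · exact hp (Or.inr (Or.inr (Or.inr ⟨h2, h1⟩)))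
        · exact hp (Or.inr (Or.inr (Or.inl ⟨h2, h1⟩)))
      · exact Or.inr (Or.inr (Or.inl ⟨h2, h1⟩))
      · exact Or.inr (Or.inl ⟨h2, h1⟩)
      · exact Or.inr (Or.inr (Or.inr (Or.inr ⟨h2, h1⟩)))
      · exact Or.inr (Or.inr (Or.inr (Or.inl ⟨h2, h1⟩)))
    have hloop : ∀ x : V,
        ¬ ((G.Adj x x ∧ ¬((x = a ∧ x = c) ∨ (x = c ∧ x = a) ∨ (x = b ∧ x = d) ∨ (x = d ∧ x = b)))
          ∨ ((x = a ∧ x = d) ∨ (x = d ∧ x = a) ∨ (x = b ∧ x = c) ∨ (x = c ∧ x = b))) := by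
      intro x h
      rcases h with ⟨hg, _⟩ | (⟨h1, h2⟩ | ⟨h1, h2⟩ | ⟨h1, h2⟩ | ⟨h1, h2⟩)
      · exact G.loopless.irrefl x hg
      · exact had (h1.symm.trans h2)
      · exact had (h2.symm.trans h1)
      · exact hbc (h1.symm.trans h2)
      · exact hbc (h2.symm.trans h1)
    let H : SimpleGraph V :=
      { Adj := fun x y =>
          (G.Adj x y ∧ ¬((x = a ∧ y = c) ∨ (x = c ∧ y = a) ∨ (x = b ∧ y = d) ∨ (x = d ∧ y = b)))
          ∨ ((x = a ∧ y = d) ∨ (x = d ∧ y = a) ∨ (x = b ∧ y = c) ∨ (x = c ∧ y = b))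
        symm := ⟨fun x y h => hsymm x y h⟩
        loopless := ⟨fun x h => hloop x h⟩ }
    have hAdj : ∀ x y, H.Adj x y ↔
        ((G.Adj x y ∧ ¬((x = a ∧ y = c) ∨ (x = c ∧ y = a) ∨ (x = b ∧ y = d) ∨ (x = d ∧ y = b)))
          ∨ ((x = a ∧ y = d) ∨ (x = d ∧ y = a) ∨ (x = b ∧ y = c) ∨ (x = c ∧ y = b))) :=
      fun x y => Iff.rfl
    have hNa : ∀ u, H.Adj a u ↔ ((G.Adj a u ∧ u ≠ c) ∨ u = d) := by
      intro u
      rw [hAdj]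
      constructor
      · rintro (⟨hg, hp⟩ | (⟨h1, h2⟩ | ⟨h1, h2⟩ | ⟨h1, h2⟩ | ⟨h1, h2⟩))
        · exact Or.inl ⟨hg, fun h => hp (Or.inl ⟨rfl, h⟩)⟩
        · exact Or.inr h2
        · exact absurd h1 had
        · exact absurd h1 hab
        · exact absurd h1 hac
      · rintro (⟨hg, hne⟩ | rfl)
        · refine Or.inl ⟨hg, ?_⟩
          rintro (⟨_, h⟩ | ⟨h, _⟩ | ⟨h, _⟩ | ⟨h, _⟩)
          exacts [hne h, hac h, hab h, had h]
        · exact Or.inr (Or.inl ⟨rfl, rfl⟩)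
    have hNb : ∀ u, H.Adj b u ↔ ((G.Adj b u ∧ u ≠ d) ∨ u = c) := by
      intro u
      rw [hAdj]
      constructor
      · rintro (⟨hg, hp⟩ | (⟨h1, h2⟩ | ⟨h1, h2⟩ | ⟨h1, h2⟩ | ⟨h1, h2⟩))
        · exact Or.inl ⟨hg, fun h => hp (Or.inr (Or.inr (Or.inl ⟨rfl, h⟩)))⟩
        · exact absurd h1.symm hab
        · exact absurd h1 hbd
        · exact Or.inr h2
        · exact absurd h1 hbc
      · rintro (⟨hg, hne⟩ | rfl)
        · refine Or.inl ⟨hg, ?_⟩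
          rintro (⟨h, _⟩ | ⟨h, _⟩ | ⟨_, h⟩ | ⟨h, _⟩)
          exacts [hab h.symm, hbc h, hne h, hbd h]
        · exact Or.inr (Or.inr (Or.inr (Or.inl ⟨rfl, rfl⟩)))
    have hNc : ∀ u, H.Adj c u ↔ ((G.Adj c u ∧ u ≠ a) ∨ u = b) := by
      intro u
      rw [hAdj]
      constructor
      · rintro (⟨hg, hp⟩ | (⟨h1, h2⟩ | ⟨h1, h2⟩ | ⟨h1, h2⟩ | ⟨h1, h2⟩))
        · exact Or.inl ⟨hg, fun h => hp (Or.inr (Or.inl ⟨rfl, h⟩))⟩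
        · exact absurd h1.symm hac
        · exact absurd h1 hcd
        · exact absurd h1.symm hbc
        · exact Or.inr h2
      · rintro (⟨hg, hne⟩ | rfl)
        · refine Or.inl ⟨hg, ?_⟩
          rintro (⟨h, _⟩ | ⟨_, h⟩ | ⟨h, _⟩ | ⟨h, _⟩)
          exacts [hac h.symm, hne h, hbc h.symm, hcd h]
        · exact Or.inr (Or.inr (Or.inr (Or.inr ⟨rfl, rfl⟩)))
    have hNd : ∀ u, H.Adj d u ↔ ((G.Adj d u ∧ u ≠ b) ∨ u = a) := by
      intro u
      rw [hAdj]
      constructor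
      · rintro (⟨hg, hp⟩ | (⟨h1, h2⟩ | ⟨h1, h2⟩ | ⟨h1, h2⟩ | ⟨h1, h2⟩))
        · exact Or.inl ⟨hg, fun h => hp (Or.inr (Or.inr (Or.inr ⟨rfl, h⟩)))⟩
        · exact absurd h1.symm had
        · exact Or.inr h2
        · exact absurd h1.symm hbd
        · exact absurd h1.symm hcd
      · rintro (⟨hg, hne⟩ | rfl)
        · refine Or.inl ⟨hg, ?_⟩
          rintro (⟨h, _⟩ | ⟨h, _⟩ | ⟨h, _⟩ | ⟨_, h⟩)
          exacts [had h.symm, hcd h.symm, hbd h.symm, hne h]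
        · exact Or.inr (Or.inr (Or.inl ⟨rfl, rfl⟩))
    have hNo : ∀ v, v ≠ a → v ≠ b → v ≠ c → v ≠ d → ∀ u, (H.Adj v u ↔ G.Adj v u) := by
      intro v h1 h2 h3 h4 u
      rw [hAdj]
      constructor
      · rintro (⟨hg, _⟩ | (⟨e, _⟩ | ⟨e, _⟩ | ⟨e, _⟩ | ⟨e, _⟩))
        exacts [hg, absurd e h1, absurd e h4, absurd e h2, absurd e h3]
      · intro hg
        refine Or.inl ⟨hg, ?_⟩
        rintro (⟨e, _⟩ | ⟨e, _⟩ | ⟨e, _⟩ | ⟨e, _⟩)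
        exacts [h1 e, h3 e, h2 e, h4 e]
    -- finset computations
    have hFa : Finset.univ.filter (fun u => H.Adj a u)
        = insert d ((Finset.univ.filter (fun u => G.Adj a u)).erase c) := by
      ext u
      simp only [Finset.mem_filter, Finset.mem_univ, true_and, Finset.mem_insert,
        Finset.mem_erase, hNa u]
      tauto
    have hFb : Finset.univ.filter (fun u => H.Adj b u)
        = insert c ((Finset.univ.filter (fun u => G.Adj b u)).erase d) := by
      ext u
      simp only [Finset.mem_filter, Finset.mem_univ, true_and, Finset.mem_insert,
        Finset.mem_erase, hNb u]
      tauto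
    have hFc : Finset.univ.filter (fun u => H.Adj c u)
        = insert b ((Finset.univ.filter (fun u => G.Adj c u)).erase a) := by
      ext u
      simp only [Finset.mem_filter, Finset.mem_univ, true_and, Finset.mem_insert,
        Finset.mem_erase, hNc u]
      tauto
    have hFd : Finset.univ.filter (fun u => H.Adj d u)
        = insert a ((Finset.univ.filter (fun u => G.Adj d u)).erase b) := by
      ext u
      simp only [Finset.mem_filter, Finset.mem_univ, true_and, Finset.mem_insert,
        Finset.mem_erase, hNd u]
      tauto
    have hFo : ∀ v, v ≠ a → v ≠ b → v ≠ c → v ≠ d →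
        Finset.univ.filter (fun u => H.Adj v u) = Finset.univ.filter (fun u => G.Adj v u) := by
      intro v h1 h2 h3 h4
      ext u
      simp only [Finset.mem_filter, Finset.mem_univ, true_and]
      exact hNo v h1 h2 h3 h4 u
    -- membership facts
    have hmc : c ∈ Finset.univ.filter (fun u => G.Adj a u) :=
      Finset.mem_filter.2 ⟨Finset.mem_univ c, gac⟩
    have hmd : d ∉ (Finset.univ.filter (fun u => G.Adj a u)).erase c := by
      intro h
      exact gnad (Finset.mem_filter.1 (Finset.mem_of_mem_erase h)).2
    have hmd' : d ∈ Finset.univ.filter (fun u => G.Adj b u) :=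
      Finset.mem_filter.2 ⟨Finset.mem_univ d, gbd⟩
    have hmc' : c ∉ (Finset.univ.filter (fun u => G.Adj b u)).erase d := by
      intro h
      exact gnbc (Finset.mem_filter.1 (Finset.mem_of_mem_erase h)).2
    have hma : a ∈ Finset.univ.filter (fun u => G.Adj c u) :=
      Finset.mem_filter.2 ⟨Finset.mem_univ a, gac.symm⟩
    have hmb : b ∉ (Finset.univ.filter (fun u => G.Adj c u)).erase a := by
      intro h
      exact gnbc (Finset.mem_filter.1 (Finset.mem_of_mem_erase h)).2.symm
    have hmb' : b ∈ Finset.univ.filter (fun u => G.Adj d u) :=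
      Finset.mem_filter.2 ⟨Finset.mem_univ b, gbd.symm⟩
    have hma' : a ∉ (Finset.univ.filter (fun u => G.Adj d u)).erase b := by
      intro h
      exact gnad (Finset.mem_filter.1 (Finset.mem_of_mem_erase h)).2.symm
    -- degrees are preserved
    have hdeg : ∀ v, deg H v = deg G v := by
      intro v
      rw [deg_eq H, deg_eq G]
      by_cases h1 : v = a
      · subst h1
        rw [hFa, Finset.card_insert_of_notMem hmd, Finset.card_erase_of_mem hmc]
        have := Finset.card_pos.2 ⟨c, hmc⟩
        omega
      by_cases h2 : v = b
      · subst h2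
        rw [hFb, Finset.card_insert_of_notMem hmc', Finset.card_erase_of_mem hmd']
        have := Finset.card_pos.2 ⟨d, hmd'⟩
        omega
      by_cases h3 : v = c
      · subst h3
        rw [hFc, Finset.card_insert_of_notMem hmb, Finset.card_erase_of_mem hma]
        have := Finset.card_pos.2 ⟨a, hma⟩
        omega
      by_cases h4 : v = d
      · subst h4
        rw [hFd, Finset.card_insert_of_notMem hma', Finset.card_erase_of_mem hmb']
        have := Finset.card_pos.2 ⟨b, hmb'⟩
        omega
      · rw [hFo v h1 h2 h3 h4]
    -- NDLs are preserved
    have hNDL : ∀ v, NDL H v = NDL G v := by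
      intro v
      rw [ndl_eq H, ndl_eq G]
      have hmapc : ∀ m : Multiset V, m.map (deg H) = m.map (deg G) :=
        fun m => Multiset.map_congr rfl (fun x _ => hdeg x)
      rw [hmapc]
      by_cases h1 : v = a
      · subst h1
        rw [hFa]
        exact switch_map_step hmc hmd (deg G) ecd
      by_cases h2 : v = b
      · subst h2
        rw [hFb]
        exact switch_map_step hmd' hmc' (deg G) ecd.symm
      by_cases h3 : v = c
      · subst h3
        rw [hFc]
        exact switch_map_step hma hmb (deg G) eab
      by_cases h4 : v = d
      · subst h4
        rw [hFd]
        exact switch_map_step hmb' hma' (deg G) eab.symm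
      · rw [hFo v h1 h2 h3 h4]
    have hHA : H.Adj a d := (hNa d).2 (Or.inr rfl)
    have hHG : H = G := hU H hNDL
    rw [hHG] at hHA
    exact gnad hHA
  · -- no N-switch implies uniqueness
    intro hns H hNDL
    have hdeg : ∀ v, deg H v = deg G v := by
      intro v
      rw [← ndl_card H v, ← ndl_card G v, hNDL v]
    have hcount : ∀ (v : V) (j : ℕ),
        (Finset.univ.filter (fun u => H.Adj v u ∧ deg G u = j)).card =
        (Finset.univ.filter (fun u => G.Adj v u ∧ deg G u = j)).card := by
      intro v j
      have h1 := ndl_count G v j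
      have h2 := ndl_count H v j
      have h3 : Finset.univ.filter (fun u => H.Adj v u ∧ deg H u = j) =
          Finset.univ.filter (fun u => H.Adj v u ∧ deg G u = j) := by
        apply Finset.filter_congr
        intro u _
        rw [hdeg u]
      rw [h3, hNDL v, h1] at h2
      exact h2.symm
    have hmemG : ∀ (k : ℕ) (v u : V),
        u ∈ Finset.univ.filter (fun w => G.Adj v w ∧ deg G w = k) ↔
          (G.Adj v u ∧ deg G u = k) := by
      intro k v u
      simp
    have hmemH : ∀ (k : ℕ) (v u : V),
        u ∈ Finset.univ.filter (fun w => H.Adj v w ∧ deg G w = k) ↔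
          (H.Adj v u ∧ deg G u = k) := by
      intro k v u
      simp
    have main : ∀ (i : ℕ) (x : V), deg G x = i → ∀ j : ℕ,
        Finset.univ.filter (fun u => G.Adj x u ∧ deg G u = j) =
        Finset.univ.filter (fun u => H.Adj x u ∧ deg G u = j) := by
      intro i x hxi j
      have hxD : x ∈ Finset.univ.filter (fun u => deg G u = i) :=
        Finset.mem_filter.2 ⟨Finset.mem_univ x, hxi⟩
      by_cases hij : i = j
      · subst hij
        refine aux_uni (Finset.univ.filter (fun u => deg G u = i))
          (fun v => Finset.univ.filter (fun u => G.Adj v u ∧ deg G u = i))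
          (fun v => Finset.univ.filter (fun u => H.Adj v u ∧ deg G u = i))
          ?_ ?_ ?_ ?_ ?_ ?_ ?_ ?_ x hxD
        · intro z _ u hu
          exact Finset.mem_filter.2 ⟨Finset.mem_univ u, ((hmemG i z u).1 hu).2⟩
        · intro z _ u hu
          exact Finset.mem_filter.2 ⟨Finset.mem_univ u, ((hmemH i z u).1 hu).2⟩
        · intro z _ hz
          exact G.loopless.irrefl z ((hmemG i z z).1 hz).1
        · intro z _ hz
          exact H.loopless.irrefl z ((hmemH i z z).1 hz).1
        · intro u hu z hz h
          obtain ⟨hadj, _⟩ := (hmemG i z u).1 h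
          exact (hmemG i u z).2 ⟨hadj.symm, (Finset.mem_filter.1 hz).2⟩
        · intro u hu z hz h
          obtain ⟨hadj, _⟩ := (hmemH i z u).1 h
          exact (hmemH i u z).2 ⟨hadj.symm, (Finset.mem_filter.1 hz).2⟩
        · intro z _
          exact (hcount z i).symm
        · intro p hp q hq c' d' hpq hcd hcb hda hc hd hnc hnd
          obtain ⟨hpc, hdc⟩ := (hmemG i p c').1 hc
          obtain ⟨hqd, hdd⟩ := (hmemG i q d').1 hd
          refine hns ⟨p, q, c', d', hpq, hpc.ne, Ne.symm hda, Ne.symm hcb, hqd.ne, hcd,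
            hpc, hqd, ?_, ?_, ?_, ?_⟩
          · intro h
            exact hnd ((hmemG i p d').2 ⟨h, hdd⟩)
          · intro h
            exact hnc ((hmemG i q c').2 ⟨h, hdc⟩)
          · rw [(Finset.mem_filter.1 hp).2, (Finset.mem_filter.1 hq).2]
          · rw [hdc, hdd]
      · refine aux_bip (Finset.univ.filter (fun u => deg G u = i))
          (fun v => Finset.univ.filter (fun u => G.Adj v u ∧ deg G u = j))
          (fun v => Finset.univ.filter (fun u => H.Adj v u ∧ deg G u = j))
          ?_ ?_ ?_ x hxD
        · intro z _
          exact (hcount z j).symm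
        · intro c'
          by_cases hc : deg G c' = j
          · have e1 : (Finset.univ.filter (fun u => deg G u = i)).filter
                (fun z => c' ∈ Finset.univ.filter (fun u => G.Adj z u ∧ deg G u = j)) =
                Finset.univ.filter (fun u => G.Adj c' u ∧ deg G u = i) := by
              ext u
              simp only [Finset.mem_filter, Finset.mem_univ, true_and]
              constructor
              · rintro ⟨h1, h2, _⟩
                exact ⟨h2.symm, h1⟩
              · rintro ⟨h1, h2⟩
                exact ⟨h2, h1.symm, hc⟩
            have e2 : (Finset.univ.filter (fun u => deg G u = i)).filter
                (fun z => c' ∈ Finset.univ.filter (fun u => H.Adj z u ∧ deg G u = j)) =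
                Finset.univ.filter (fun u => H.Adj c' u ∧ deg G u = i) := by
              ext u
              simp only [Finset.mem_filter, Finset.mem_univ, true_and]
              constructor
              · rintro ⟨h1, h2, _⟩
                exact ⟨h2.symm, h1⟩
              · rintro ⟨h1, h2⟩
                exact ⟨h2, h1.symm, hc⟩
            rw [e1, e2]
            exact (hcount c' i).symm
          · have e1 : (Finset.univ.filter (fun u => deg G u = i)).filter
                (fun z => c' ∈ Finset.univ.filter (fun u => G.Adj z u ∧ deg G u = j)) = ∅ := by
              rw [Finset.filter_eq_empty_iff]
              intro z _ h
              exact hc ((hmemG j z c').1 h).2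
            have e2 : (Finset.univ.filter (fun u => deg G u = i)).filter
                (fun z => c' ∈ Finset.univ.filter (fun u => H.Adj z u ∧ deg G u = j)) = ∅ := by
              rw [Finset.filter_eq_empty_iff]
              intro z _ h
              exact hc ((hmemH j z c').1 h).2
            rw [e1, e2]
        · intro p hp q hq
          rcases eq_or_ne p q with rfl | hpq
          · exact Or.inl subset_rfl
          by_contra hcon
          rw [not_or] at hcon
          obtain ⟨c', hc1, hc2⟩ := Finset.not_subset.1 hcon.1
          obtain ⟨d', hd1, hd2⟩ := Finset.not_subset.1 hcon.2
          obtain ⟨hpc, hdc⟩ := (hmemG j p c').1 hc1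
          obtain ⟨hqd, hdd⟩ := (hmemG j q d').1 hd1
          have dp : deg G p = i := (Finset.mem_filter.1 hp).2
          have dq : deg G q = i := (Finset.mem_filter.1 hq).2
          have hic : ∀ z w : V, deg G z = i → deg G w = j → z ≠ w := by
            intro z w hz hw h
            exact hij (by rw [← hz, h, hw])
          refine hns ⟨p, q, c', d', hpq, hic p c' dp hdc, hic p d' dp hdd,
            hic q c' dq hdc, hic q d' dq hdd, ?_, hpc, hqd, ?_, ?_, ?_, ?_⟩
          · intro h
            rw [← h] at hd1
            exact hc2 hd1
          · intro h
            exact hd2 ((hmemG j p d').2 ⟨h, hdd⟩)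
          · intro h
            exact hc2 ((hmemG j q c').2 ⟨h, hdc⟩)
          · rw [dp, dq]
          · rw [hdc, hdd]
    ext x y
    have hm := main (deg G x) x rfl (deg G y)
    constructor
    · intro h
      have h1 : y ∈ Finset.univ.filter (fun u => H.Adj x u ∧ deg G u = deg G y) :=
        (hmemH (deg G y) x y).2 ⟨h, rfl⟩
      rw [← hm] at h1
      exact ((hmemG (deg G y) x y).1 h1).1
    · intro h
      have h1 : y ∈ Finset.univ.filter (fun u => G.Adj x u ∧ deg G u = deg G y) :=
        (hmemG (deg G y) x y).2 ⟨h, rfl⟩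
      rw [hm] at h1
      exact ((hmemH (deg G y) x y).1 h1).1
end

section
/- Let G be a finite simple graph, and for each nonnegative integer k let V_k denote the set of vertices of G of degree k. Then G is the unique labeled realization of its neighborhood degree list (i.e., every simple graph H on the same vertex set with NDL_H(v) = NDL_G(v) for all vertices v satisfies H = G) if and only if both of the following hold: (a) for every k, the induced subgraph G[V_k] is the unique graph on vertex set V_k in which every vertex has its given degree (every graph on V_k in which each vertex has the same degree as it has in G[V_k] equals G[V_k]); (b) for every pair of distinct values k and ℓ, the bipartite graph G[V_k, V_ℓ] is the unique bipartite graph with partite sets V_k and V_ℓ in which every vertex has its given degree (every bipartite graph on V_k ∪ V_ℓ with all edges joining V_k to V_ℓ in which each vertex has the same degree as it has in G[V_k, V_ℓ] equals G[V_k, V_ℓ]). -/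
/-- The subgraph of `G` consisting precisely of the edges of `G` joining `s` to `t`. -/
def crossGraph {V : Type*} (G : SimpleGraph V) (s t : Set V) : SimpleGraph V where
  Adj u w := G.Adj u w ∧ ((u ∈ s ∧ w ∈ t) ∨ (u ∈ t ∧ w ∈ s))
  symm := ⟨fun u w h => ⟨h.1.symm, by tauto⟩⟩
  loopless := ⟨fun v h => G.irrefl h.1⟩

set_option linter.unusedSectionVars false

section Helpers

variable {V : Type*} [Fintype V]

lemma card_NDL (G : SimpleGraph V) (v : V) : Multiset.card (NDL G v) = deg G v := by
  rw [NDL, Multiset.card_map, deg,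
    Set.ncard_eq_toFinset_card _ (G.neighborSet v).toFinite]
  rfl

lemma count_NDL (G : SimpleGraph V) (v : V) (k : ℕ) :
    (NDL G v).count k = (G.neighborSet v ∩ {w | deg G w = k}).ncard := by
  classical
  rw [NDL, Multiset.count_map]
  rw [Set.ncard_eq_toFinset_card ((G.neighborSet v ∩ {w | deg G w = k}))
    ((G.neighborSet v).toFinite.inter_of_left _)]
  rw [show (((G.neighborSet v).toFinite.inter_of_left {w | deg G w = k}).toFinset)
      = (G.neighborSet v).toFinite.toFinset.filter (fun w => k = deg G w) by
    ext w
    simp only [Set.Finite.mem_toFinset, Finset.mem_filter, Set.mem_inter_iff,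
      Set.mem_setOf_eq, SimpleGraph.mem_neighborSet]
    tauto]
  rfl

lemma deg_of_NDL_eq {H G : SimpleGraph V} (h : ∀ v, NDL H v = NDL G v) (v : V) :
    deg H v = deg G v := by
  rw [← card_NDL, ← card_NDL, h]

lemma counts_of_NDL_eq {H G : SimpleGraph V} (h : ∀ v, NDL H v = NDL G v) (v : V) (k : ℕ) :
    (H.neighborSet v ∩ {w | deg G w = k}).ncard
      = (G.neighborSet v ∩ {w | deg G w = k}).ncard := by
  classical
  have h2 := (Multiset.ext.mp (h v)) k
  rw [count_NDL, count_NDL] at h2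
  rwa [show {w | deg H w = k} = {w | deg G w = k} from by
    ext w; simp [deg_of_NDL_eq h]] at h2

lemma NDL_eq_of_counts {H G : SimpleGraph V} (hdeg : ∀ v, deg H v = deg G v)
    (hc : ∀ v k, (H.neighborSet v ∩ {w | deg G w = k}).ncard
      = (G.neighborSet v ∩ {w | deg G w = k}).ncard) (v : V) : NDL H v = NDL G v := by
  classical
  rw [Multiset.ext]
  intro k
  rw [count_NDL, count_NDL,
    show {w | deg H w = k} = {w | deg G w = k} from by ext w; simp [hdeg]]
  exact hc v k

lemma image_neighborSet_induce (G : SimpleGraph V) (U : Set V) (x : ↥U) :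
    Subtype.val '' ((G.induce U).neighborSet x) = {w ∈ U | G.Adj x.1 w} := by
  ext w
  constructor
  · rintro ⟨y, hy, rfl⟩
    exact ⟨y.2, hy⟩
  · rintro ⟨hwU, hadj⟩
    exact ⟨⟨w, hwU⟩, hadj, rfl⟩

lemma deg_induce (G : SimpleGraph V) (U : Set V) (x : ↥U) :
    deg (G.induce U) x = {w ∈ U | G.Adj x.1 w}.ncard := by
  rw [deg, ← image_neighborSet_induce,
    Set.ncard_image_of_injective _ Subtype.val_injective]

lemma deg_induce' (G : SimpleGraph V) (U : Set V) (x : ↥U) :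
    deg (G.induce U) x = (G.neighborSet x.1 ∩ U).ncard := by
  rw [deg_induce]
  congr 1
  ext w
  simp only [Set.mem_setOf_eq, Set.mem_inter_iff, SimpleGraph.mem_neighborSet]
  tauto

lemma deg_cross_left (G : SimpleGraph V) {S T : Set V} (x : ↥(S ∪ T))
    (hx : x.1 ∈ S) (hx' : x.1 ∉ T) :
    deg ((crossGraph G S T).induce (S ∪ T)) x = (G.neighborSet x.1 ∩ T).ncard := by
  rw [deg_induce]
  congr 1
  ext w
  simp only [Set.mem_setOf_eq, Set.mem_inter_iff, SimpleGraph.mem_neighborSet, crossGraph,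
    Set.mem_union]
  constructor
  · rintro ⟨_, hadj, hc⟩
    refine ⟨hadj, ?_⟩
    rcases hc with ⟨_, hw⟩ | ⟨hxt, _⟩
    · exact hw
    · exact absurd hxt hx'
  · rintro ⟨hadj, hwT⟩
    exact ⟨Or.inr hwT, hadj, Or.inl ⟨hx, hwT⟩⟩

lemma deg_cross_right (G : SimpleGraph V) {S T : Set V} (x : ↥(S ∪ T))
    (hx : x.1 ∈ T) (hx' : x.1 ∉ S) :
    deg ((crossGraph G S T).induce (S ∪ T)) x = (G.neighborSet x.1 ∩ S).ncard := by
  rw [deg_induce]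
  congr 1
  ext w
  simp only [Set.mem_setOf_eq, Set.mem_inter_iff, SimpleGraph.mem_neighborSet, crossGraph,
    Set.mem_union]
  constructor
  · rintro ⟨_, hadj, hc⟩
    refine ⟨hadj, ?_⟩
    rcases hc with ⟨hxs, _⟩ | ⟨_, hw⟩
    · exact absurd hxs hx'
    · exact hw
  · rintro ⟨hadj, hwS⟩
    exact ⟨Or.inl hwS, hadj, Or.inr ⟨hx, hwS⟩⟩

end Helpers

section Patch

variable {V : Type*}

/-- Replace the part of `G` inside `U` by `F`. -/
def patch (G : SimpleGraph V) (U : Set V) (F : SimpleGraph ↥U) : SimpleGraph V where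
  Adj u w := (∃ hu : u ∈ U, ∃ hw : w ∈ U, F.Adj ⟨u, hu⟩ ⟨w, hw⟩)
    ∨ (G.Adj u w ∧ ¬(u ∈ U ∧ w ∈ U))
  symm := by
    constructor
    rintro u w (⟨h1, h2, h⟩ | ⟨h, hn⟩)
    · exact Or.inl ⟨h2, h1, h.symm⟩
    · exact Or.inr ⟨h.symm, fun hc => hn ⟨hc.2, hc.1⟩⟩
  loopless := by
    constructor
    rintro v (⟨h1, h2, h⟩ | ⟨h, _⟩)
    · exact F.irrefl h
    · exact G.irrefl h

lemma patch_adj_in {G : SimpleGraph V} {U : Set V} {F : SimpleGraph ↥U} {u w : V}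
    (hu : u ∈ U) (hw : w ∈ U) :
    (patch G U F).Adj u w ↔ F.Adj ⟨u, hu⟩ ⟨w, hw⟩ := by
  constructor
  · rintro (⟨h1, h2, h⟩ | ⟨_, hn⟩)
    · exact h
    · exact absurd ⟨hu, hw⟩ hn
  · exact fun h => Or.inl ⟨hu, hw, h⟩

lemma patch_adj_out {G : SimpleGraph V} {U : Set V} {F : SimpleGraph ↥U} {u w : V}
    (h : ¬(u ∈ U ∧ w ∈ U)) :
    (patch G U F).Adj u w ↔ G.Adj u w := by
  constructor
  · rintro (⟨h1, h2, _⟩ | ⟨hg, _⟩)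
    · exact absurd ⟨h1, h2⟩ h
    · exact hg
  · exact fun hg => Or.inr ⟨hg, h⟩

/-- Replace the cross edges of `G` between `S` and `T` by `F`. -/
def patchC (G : SimpleGraph V) (S T : Set V) (F : SimpleGraph ↥(S ∪ T)) : SimpleGraph V where
  Adj u w := (∃ hu : u ∈ S ∪ T, ∃ hw : w ∈ S ∪ T, F.Adj ⟨u, hu⟩ ⟨w, hw⟩)
    ∨ (G.Adj u w ∧ ¬((u ∈ S ∧ w ∈ T) ∨ (u ∈ T ∧ w ∈ S)))
  symm := by
    constructor
    rintro u w (⟨h1, h2, h⟩ | ⟨h, hn⟩)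
    · exact Or.inl ⟨h2, h1, h.symm⟩
    · exact Or.inr ⟨h.symm, by tauto⟩
  loopless := by
    constructor
    rintro v (⟨h1, h2, h⟩ | ⟨h, _⟩)
    · exact F.irrefl h
    · exact G.irrefl h

lemma patchC_adj_cross {G : SimpleGraph V} {S T : Set V} {F : SimpleGraph ↥(S ∪ T)} {u w : V}
    (hu : u ∈ S ∪ T) (hw : w ∈ S ∪ T)
    (hc : (u ∈ S ∧ w ∈ T) ∨ (u ∈ T ∧ w ∈ S)) :
    (patchC G S T F).Adj u w ↔ F.Adj ⟨u, hu⟩ ⟨w, hw⟩ := by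
  constructor
  · rintro (⟨h1, h2, h⟩ | ⟨_, hn⟩)
    · exact h
    · exact absurd hc hn
  · exact fun h => Or.inl ⟨hu, hw, h⟩

lemma patchC_adj_noncross {G : SimpleGraph V} {S T : Set V} {F : SimpleGraph ↥(S ∪ T)} {u w : V}
    (hF : ∀ x y : ↥(S ∪ T), F.Adj x y → (x.1 ∈ S ∧ y.1 ∈ T) ∨ (x.1 ∈ T ∧ y.1 ∈ S))
    (h : ¬((u ∈ S ∧ w ∈ T) ∨ (u ∈ T ∧ w ∈ S))) :
    (patchC G S T F).Adj u w ↔ G.Adj u w := by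
  constructor
  · rintro (⟨h1, h2, hadj⟩ | ⟨hg, _⟩)
    · exact absurd (hF _ _ hadj) h
    · exact hg
  · exact fun hg => Or.inr ⟨hg, h⟩

end Patch

section Main

variable {V : Type*} [Fintype V]

lemma lemA (G : SimpleGraph V)
    (huniq : ∀ H : SimpleGraph V, (∀ v, NDL H v = NDL G v) → H = G)
    (k : ℕ) (S : Set V) (hS : S = {v : V | deg G v = k})
    (F : SimpleGraph ↥S) (hF : ∀ x, deg F x = deg (G.induce S) x) :
    F = G.induce S := by
  have hNdiff : ∀ v, (patch G S F).neighborSet v \ S = G.neighborSet v \ S := by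
    intro v
    ext w
    simp only [Set.mem_diff, SimpleGraph.mem_neighborSet]
    constructor
    · rintro ⟨hadj, hw⟩
      exact ⟨(patch_adj_out (fun hc => hw hc.2)).mp hadj, hw⟩
    · rintro ⟨hadj, hw⟩
      exact ⟨(patch_adj_out (fun hc => hw hc.2)).mpr hadj, hw⟩
  have hNout : ∀ v, v ∉ S → (patch G S F).neighborSet v = G.neighborSet v := by
    intro v hv
    ext w
    exact patch_adj_out (fun hc => hv hc.1)
  have hNin : ∀ v (hv : v ∈ S),
      (patch G S F).neighborSet v ∩ S = Subtype.val '' (F.neighborSet ⟨v, hv⟩) := by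
    intro v hv
    ext w
    simp only [Set.mem_inter_iff, SimpleGraph.mem_neighborSet]
    constructor
    · rintro ⟨hadj, hw⟩
      exact ⟨⟨w, hw⟩, (patch_adj_in hv hw).mp hadj, rfl⟩
    · rintro ⟨y, hy, rfl⟩
      exact ⟨(patch_adj_in hv y.2).mpr hy, y.2⟩
  have hcardin : ∀ v (hv : v ∈ S),
      ((patch G S F).neighborSet v ∩ S).ncard = (G.neighborSet v ∩ S).ncard := by
    intro v hv
    rw [hNin v hv, Set.ncard_image_of_injective _ Subtype.val_injective]
    have h1 := hF ⟨v, hv⟩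
    rw [deg_induce' G S ⟨v, hv⟩] at h1
    exact h1
  have hdeg : ∀ v, deg (patch G S F) v = deg G v := by
    intro v
    by_cases hv : v ∈ S
    · rw [deg, deg, ← Set.ncard_inter_add_ncard_diff_eq_ncard ((patch G S F).neighborSet v) S,
        ← Set.ncard_inter_add_ncard_diff_eq_ncard (G.neighborSet v) S,
        hcardin v hv, hNdiff v]
    · rw [deg, deg, hNout v hv]
  have hcount : ∀ v k', ((patch G S F).neighborSet v ∩ {w | deg G w = k'}).ncard
      = (G.neighborSet v ∩ {w | deg G w = k'}).ncard := by
    intro v k'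
    by_cases hv : v ∈ S
    · by_cases hk : k' = k
      · subst hk
        rw [← hS]
        exact hcardin v hv
      · congr 1
        ext w
        simp only [Set.mem_inter_iff, SimpleGraph.mem_neighborSet, Set.mem_setOf_eq]
        have hwS : ∀ (hw : deg G w = k'), w ∉ S := by
          intro hw hwS
          rw [hS] at hwS
          exact hk (hw.symm.trans hwS)
        constructor
        · rintro ⟨hadj, hw⟩
          exact ⟨(patch_adj_out (fun hc => hwS hw hc.2)).mp hadj, hw⟩
        · rintro ⟨hadj, hw⟩
          exact ⟨(patch_adj_out (fun hc => hwS hw hc.2)).mpr hadj, hw⟩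
    · rw [hNout v hv]
  have hHG : patch G S F = G := huniq _ (NDL_eq_of_counts hdeg hcount)
  ext x y
  have h1 : (patch G S F).Adj x.1 y.1 ↔ F.Adj x y := patch_adj_in x.2 y.2
  rw [hHG] at h1
  rw [← h1]
  simp [SimpleGraph.comap_adj]

lemma lemB (G : SimpleGraph V)
    (huniq : ∀ H : SimpleGraph V, (∀ v, NDL H v = NDL G v) → H = G)
    (k ℓ : ℕ) (hkl : k ≠ ℓ) (S T : Set V)
    (hS : S = {v : V | deg G v = k}) (hT : T = {v : V | deg G v = ℓ})
    (F : SimpleGraph ↥(S ∪ T))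
    (hFc : ∀ x y : ↥(S ∪ T), F.Adj x y → (x.1 ∈ S ∧ y.1 ∈ T) ∨ (x.1 ∈ T ∧ y.1 ∈ S))
    (hF : ∀ x, deg F x = deg ((crossGraph G S T).induce (S ∪ T)) x) :
    F = (crossGraph G S T).induce (S ∪ T) := by
  have hST : ∀ v, v ∈ S → v ∉ T := by
    intro v hv hv'
    rw [hS] at hv; rw [hT] at hv'
    exact hkl (hv.symm.trans hv')
  have hTS : ∀ v, v ∈ T → v ∉ S := fun v hv hv' => hST v hv' hv
  have hadj_nc : ∀ u w, ¬((u ∈ S ∧ w ∈ T) ∨ (u ∈ T ∧ w ∈ S)) →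
      ((patchC G S T F).Adj u w ↔ G.Adj u w) := fun u w h => patchC_adj_noncross hFc h
  have hNout : ∀ v, v ∉ S → v ∉ T → (patchC G S T F).neighborSet v = G.neighborSet v := by
    intro v hv hv'
    ext w
    exact hadj_nc v w (by tauto)
  have hNinS : ∀ v (hv : v ∈ S),
      (patchC G S T F).neighborSet v ∩ T = Subtype.val '' (F.neighborSet ⟨v, Or.inl hv⟩) := by
    intro v hv
    ext w
    simp only [Set.mem_inter_iff, SimpleGraph.mem_neighborSet]
    constructor
    · rintro ⟨hadj, hw⟩
      exact ⟨⟨w, Or.inr hw⟩,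
        (patchC_adj_cross (Or.inl hv) (Or.inr hw) (Or.inl ⟨hv, hw⟩)).mp hadj, rfl⟩
    · rintro ⟨y, hy, rfl⟩
      have hyT : y.1 ∈ T := by
        rcases hFc _ _ hy with ⟨_, h⟩ | ⟨hvT, _⟩
        · exact h
        · exact absurd hvT (hST v hv)
      exact ⟨(patchC_adj_cross (Or.inl hv) y.2 (Or.inl ⟨hv, hyT⟩)).mpr hy, hyT⟩
  have hNinT : ∀ v (hv : v ∈ T),
      (patchC G S T F).neighborSet v ∩ S = Subtype.val '' (F.neighborSet ⟨v, Or.inr hv⟩) := by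
    intro v hv
    ext w
    simp only [Set.mem_inter_iff, SimpleGraph.mem_neighborSet]
    constructor
    · rintro ⟨hadj, hw⟩
      exact ⟨⟨w, Or.inl hw⟩,
        (patchC_adj_cross (Or.inr hv) (Or.inl hw) (Or.inr ⟨hv, hw⟩)).mp hadj, rfl⟩
    · rintro ⟨y, hy, rfl⟩
      have hyS : y.1 ∈ S := by
        rcases hFc _ _ hy with ⟨hvS, _⟩ | ⟨_, h⟩
        · exact absurd hvS (hTS v hv)
        · exact h
      exact ⟨(patchC_adj_cross (Or.inr hv) y.2 (Or.inr ⟨hv, hyS⟩)).mpr hy, hyS⟩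
  have hcardS : ∀ v (hv : v ∈ S),
      ((patchC G S T F).neighborSet v ∩ T).ncard = (G.neighborSet v ∩ T).ncard := by
    intro v hv
    rw [hNinS v hv, Set.ncard_image_of_injective _ Subtype.val_injective]
    have h1 := hF ⟨v, Or.inl hv⟩
    rw [deg_cross_left G ⟨v, Or.inl hv⟩ hv (hST v hv)] at h1
    exact h1
  have hcardT : ∀ v (hv : v ∈ T),
      ((patchC G S T F).neighborSet v ∩ S).ncard = (G.neighborSet v ∩ S).ncard := by
    intro v hv
    rw [hNinT v hv, Set.ncard_image_of_injective _ Subtype.val_injective]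
    have h1 := hF ⟨v, Or.inr hv⟩
    rw [deg_cross_right G ⟨v, Or.inr hv⟩ hv (hTS v hv)] at h1
    exact h1
  have hNdiffS : ∀ v, v ∈ S →
      (patchC G S T F).neighborSet v \ T = G.neighborSet v \ T := by
    intro v hv
    ext w
    simp only [Set.mem_diff, SimpleGraph.mem_neighborSet]
    have h2 := hadj_nc v w
    have hv' := hST v hv
    constructor
    · rintro ⟨hadj, hw⟩
      exact ⟨(h2 (by tauto)).mp hadj, hw⟩
    · rintro ⟨hadj, hw⟩
      exact ⟨(h2 (by tauto)).mpr hadj, hw⟩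
  have hNdiffT : ∀ v, v ∈ T →
      (patchC G S T F).neighborSet v \ S = G.neighborSet v \ S := by
    intro v hv
    have hv' := hTS v hv
    ext w
    simp only [Set.mem_diff, SimpleGraph.mem_neighborSet]
    have h2 := hadj_nc v w
    constructor
    · rintro ⟨hadj, hw⟩
      exact ⟨(h2 (by tauto)).mp hadj, hw⟩
    · rintro ⟨hadj, hw⟩
      exact ⟨(h2 (by tauto)).mpr hadj, hw⟩
  have hdeg : ∀ v, deg (patchC G S T F) v = deg G v := by
    intro v
    by_cases hv : v ∈ S
    · rw [deg, deg,
        ← Set.ncard_inter_add_ncard_diff_eq_ncard ((patchC G S T F).neighborSet v) T,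
        ← Set.ncard_inter_add_ncard_diff_eq_ncard (G.neighborSet v) T,
        hcardS v hv, hNdiffS v hv]
    · by_cases hv' : v ∈ T
      · rw [deg, deg,
          ← Set.ncard_inter_add_ncard_diff_eq_ncard ((patchC G S T F).neighborSet v) S,
          ← Set.ncard_inter_add_ncard_diff_eq_ncard (G.neighborSet v) S,
          hcardT v hv', hNdiffT v hv']
      · rw [deg, deg, hNout v hv hv']
  have hcount : ∀ v k', ((patchC G S T F).neighborSet v ∩ {w | deg G w = k'}).ncard
      = (G.neighborSet v ∩ {w | deg G w = k'}).ncard := by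
    intro v k'
    by_cases hv : v ∈ S
    · by_cases hk : k' = ℓ
      · subst hk
        rw [← hT]
        exact hcardS v hv
      · congr 1
        ext w
        simp only [Set.mem_inter_iff, SimpleGraph.mem_neighborSet, Set.mem_setOf_eq]
        have hnc : ∀ (hw : deg G w = k'), ¬((v ∈ S ∧ w ∈ T) ∨ (v ∈ T ∧ w ∈ S)) := by
          intro hw hc
          rcases hc with ⟨_, hwT⟩ | ⟨hvT, _⟩
          · rw [hT] at hwT
            exact hk (hw.symm.trans hwT)
          · exact hST v hv hvT
        constructor
        · rintro ⟨hadj, hw⟩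
          exact ⟨(hadj_nc v w (hnc hw)).mp hadj, hw⟩
        · rintro ⟨hadj, hw⟩
          exact ⟨(hadj_nc v w (hnc hw)).mpr hadj, hw⟩
    · by_cases hv' : v ∈ T
      · by_cases hk : k' = k
        · subst hk
          rw [← hS]
          exact hcardT v hv'
        · congr 1
          ext w
          simp only [Set.mem_inter_iff, SimpleGraph.mem_neighborSet, Set.mem_setOf_eq]
          have hnc : ∀ (hw : deg G w = k'), ¬((v ∈ S ∧ w ∈ T) ∨ (v ∈ T ∧ w ∈ S)) := by
            intro hw hc
            rcases hc with ⟨hvS, _⟩ | ⟨_, hwS⟩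
            · exact hv hvS
            · rw [hS] at hwS
              exact hk (hw.symm.trans hwS)
          constructor
          · rintro ⟨hadj, hw⟩
            exact ⟨(hadj_nc v w (hnc hw)).mp hadj, hw⟩
          · rintro ⟨hadj, hw⟩
            exact ⟨(hadj_nc v w (hnc hw)).mpr hadj, hw⟩
      · rw [hNout v hv hv']
  have hHG : patchC G S T F = G := huniq _ (NDL_eq_of_counts hdeg hcount)
  ext x y
  simp only [SimpleGraph.comap_adj, Function.Embedding.coe_subtype]
  constructor
  · intro hadj
    have hc := hFc x y hadj
    have h1 : (patchC G S T F).Adj x.1 y.1 := (patchC_adj_cross x.2 y.2 hc).mpr hadj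
    rw [hHG] at h1
    simp only [crossGraph]
    exact ⟨h1, hc⟩
  · intro hadj
    have hadj' : G.Adj x.1 y.1 ∧ ((x.1 ∈ S ∧ y.1 ∈ T) ∨ (x.1 ∈ T ∧ y.1 ∈ S)) := by
      simpa only [crossGraph] using hadj
    have h1 : (patchC G S T F).Adj x.1 y.1 := by
      rw [hHG]; exact hadj'.1
    exact (patchC_adj_cross x.2 y.2 hadj'.2).mp h1

end Main

/-- A finite simple graph `G` is the unique labeled realization of its neighborhood
degree list iff (a) for every `k` the induced subgraph `G[V_k]` is the unique graph
on `V_k` with its degrees, and (b) for all distinct `k, ℓ` the bipartite graph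
`G[V_k, V_ℓ]` is the unique bipartitioned graph with partite sets `V_k`, `V_ℓ`
having its degrees. -/
theorem stmt10 {V : Type*} [Fintype V] (G : SimpleGraph V) :
    (∀ H : SimpleGraph V, (∀ v, NDL H v = NDL G v) → H = G) ↔
      ((∀ k : ℕ, ∀ F : SimpleGraph ↥{v : V | deg G v = k},
          (∀ x, deg F x = deg (G.induce {v : V | deg G v = k}) x) →
          F = G.induce {v : V | deg G v = k}) ∧
       (∀ k ℓ : ℕ, k ≠ ℓ →
          ∀ F : SimpleGraph ↥({v : V | deg G v = k} ∪ {v : V | deg G v = ℓ}),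
            (∀ x y, F.Adj x y →
              (deg G x.1 = k ∧ deg G y.1 = ℓ) ∨ (deg G x.1 = ℓ ∧ deg G y.1 = k)) →
            (∀ x, deg F x =
              deg ((crossGraph G {v : V | deg G v = k} {v : V | deg G v = ℓ}).induce
                ({v : V | deg G v = k} ∪ {v : V | deg G v = ℓ})) x) →
            F = (crossGraph G {v : V | deg G v = k} {v : V | deg G v = ℓ}).induce
                ({v : V | deg G v = k} ∪ {v : V | deg G v = ℓ}))) := by
  constructor
  · intro huniq
    refine ⟨fun k F hF => lemA G huniq k _ rfl F hF, fun k ℓ hkl F hFc hF => ?_⟩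
    exact lemB G huniq k ℓ hkl _ _ rfl rfl F hFc hF
  · rintro ⟨ha, hb⟩ H hNDL
    have hdeg : ∀ v, deg H v = deg G v := deg_of_NDL_eq hNDL
    have hc := counts_of_NDL_eq hNDL
    have hwithin : ∀ k : ℕ,
        H.induce {v : V | deg G v = k} = G.induce {v : V | deg G v = k} := by
      intro k
      apply ha k
      intro x
      rw [deg_induce' H _ x, deg_induce' G _ x]
      exact hc x.1 k
    have hcross : ∀ k ℓ : ℕ, k ≠ ℓ →
        (crossGraph H {v : V | deg G v = k} {v : V | deg G v = ℓ}).induce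
            ({v : V | deg G v = k} ∪ {v : V | deg G v = ℓ})
          = (crossGraph G {v : V | deg G v = k} {v : V | deg G v = ℓ}).induce
            ({v : V | deg G v = k} ∪ {v : V | deg G v = ℓ}) := by
      intro k ℓ hkl
      have hST : ∀ v : V, v ∈ {v : V | deg G v = k} → v ∉ {v : V | deg G v = ℓ} :=
        fun v hv hv' => hkl (hv.symm.trans hv')
      apply hb k ℓ hkl
      · intro x y hadj
        simp only [SimpleGraph.comap_adj, Function.Embedding.coe_subtype, crossGraph] at hadj
        rcases hadj.2 with ⟨h1, h2⟩ | ⟨h1, h2⟩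
        · exact Or.inl ⟨h1, h2⟩
        · exact Or.inr ⟨h1, h2⟩
      · intro x
        rcases x.2 with hx | hx
        · rw [deg_cross_left H x hx (hST _ hx), deg_cross_left G x hx (hST _ hx)]
          exact hc x.1 ℓ
        · have hx' : x.1 ∉ {v : V | deg G v = k} := fun h => hST _ h hx
          rw [deg_cross_right H x hx hx', deg_cross_right G x hx hx']
          exact hc x.1 k
    ext u w
    by_cases hkl : deg G u = deg G w
    · have hu : u ∈ {v : V | deg G v = deg G u} := rfl
      have hw : w ∈ {v : V | deg G v = deg G u} := hkl.symm
      have h2 : (H.induce {v : V | deg G v = deg G u}).Adj ⟨u, hu⟩ ⟨w, hw⟩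
          ↔ (G.induce {v : V | deg G v = deg G u}).Adj ⟨u, hu⟩ ⟨w, hw⟩ := by
        rw [hwithin (deg G u)]
      simpa using h2
    · have hu : u ∈ {v : V | deg G v = deg G u} ∪ {v : V | deg G v = deg G w} := Or.inl rfl
      have hw : w ∈ {v : V | deg G v = deg G u} ∪ {v : V | deg G v = deg G w} := Or.inr rfl
      have hcr : (u ∈ {v : V | deg G v = deg G u} ∧ w ∈ {v : V | deg G v = deg G w})
          ∨ (u ∈ {v : V | deg G v = deg G w} ∧ w ∈ {v : V | deg G v = deg G u}) :=
        Or.inl ⟨rfl, rfl⟩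
      have h2 : ((crossGraph H {v : V | deg G v = deg G u} {v : V | deg G v = deg G w}).induce
            ({v : V | deg G v = deg G u} ∪ {v : V | deg G v = deg G w})).Adj ⟨u, hu⟩ ⟨w, hw⟩
          ↔ ((crossGraph G {v : V | deg G v = deg G u} {v : V | deg G v = deg G w}).induce
            ({v : V | deg G v = deg G u} ∪ {v : V | deg G v = deg G w})).Adj ⟨u, hu⟩ ⟨w, hw⟩ := by
        rw [hcross (deg G u) (deg G w) hkl]
      simp only [SimpleGraph.comap_adj, Function.Embedding.coe_subtype, crossGraph] at h2
      constructor
      · intro hadj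
        exact (h2.mp ⟨hadj, hcr⟩).1
      · intro hadj
        exact (h2.mpr ⟨hadj, hcr⟩).1
end

section
/- Let G be a finite simple graph on vertices v_1,…,v_n with degree sequence d = (d_1,…,d_n) listed in nonincreasing order (deg_G(v_i) = d_i), and let m(d) = max{i : d_i ≥ i−1}. Then G is the only simple graph on its vertex set in which each vertex v_i has degree d_i (every graph H on the same vertex set with deg_H(v_i) = d_i for all i satisfies H = G) if and only if Σ_{i=1}^k d_i = k(k−1) + Σ_{i=k+1}^n min{k, d_i} for every k ∈ {1,…,m(d)}. -/
open Finset

open scoped Classical in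
lemma deg_eq_card {n : ℕ} (G : SimpleGraph (Fin n)) (v : Fin n) :
    deg G v = (univ.filter (fun w => G.Adj v w)).card := by
  rw [deg, Set.ncard_eq_toFinset_card']
  congr 1
  ext w
  simp [SimpleGraph.neighborSet]
  exact Set.mem_toFinset

lemma card_swap_filter {V : Type*} [Fintype V] [DecidableEq V]
    (P Q : V → Prop) [DecidablePred P] [DecidablePred Q] (a b : V)
    (ha : P a) (hb : ¬ P b)
    (h : ∀ x, Q x ↔ (P x ∧ x ≠ a) ∨ x = b) :
    (univ.filter Q).card = (univ.filter P).card := by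
  have hset : univ.filter Q = insert b ((univ.filter P).erase a) := by
    ext x
    simp only [mem_filter, mem_univ, true_and, mem_insert, mem_erase, h x]
    tauto
  have hanotin : b ∉ (univ.filter P).erase a := by simp [hb]
  have hmem : a ∈ univ.filter P := by simp [ha]
  have hpos : 1 ≤ (univ.filter P).card := Finset.card_pos.mpr ⟨a, hmem⟩
  rw [hset, Finset.card_insert_of_notMem hanotin, Finset.card_erase_of_mem hmem]
  omega

def swapG {V : Type*} (G : SimpleGraph V) (p q r s' : V) : SimpleGraph V where
  Adj x y := (G.Adj x y ∧ s(x,y) ≠ s(p,q) ∧ s(x,y) ≠ s(r,s')) ∨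
    ((s(x,y) = s(p,s') ∨ s(x,y) = s(q,r)) ∧ x ≠ y)
  symm := by
    constructor; intro x y h
    have e : s(y,x) = s(x,y) := Sym2.eq_swap
    rcases h with ⟨h1, h2, h3⟩ | ⟨h1, h2⟩
    · exact Or.inl ⟨h1.symm, by rw [e]; exact h2, by rw [e]; exact h3⟩
    · exact Or.inr ⟨by rw [e]; exact h1, h2.symm⟩
  loopless := by
    constructor; intro x h
    rcases h with ⟨h, _⟩ | ⟨_, h⟩
    · exact G.loopless.irrefl x h
    · exact h rfl

lemma swapG_adj {V : Type*} (G : SimpleGraph V) (p q r s' x y : V) :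
    (swapG G p q r s').Adj x y ↔
      (G.Adj x y ∧ s(x,y) ≠ s(p,q) ∧ s(x,y) ≠ s(r,s')) ∨
      ((s(x,y) = s(p,s') ∨ s(x,y) = s(q,r)) ∧ x ≠ y) := Iff.rfl

section
variable {V : Type*} (G : SimpleGraph V) (p q r s' : V)

lemma swapG_adj_p (h1 : p ≠ q) (hpr : p ≠ r) (hps2 : p ≠ s') (y : V) :
    (swapG G p q r s').Adj p y ↔ (G.Adj p y ∧ y ≠ q) ∨ y = s' := by
  have e1 : s(p,y) = s(p,q) ↔ y = q := by simp [Sym2.eq_iff, h1]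
  have e2 : s(p,y) = s(r,s') ↔ False := by simp [Sym2.eq_iff, hpr, hps2]
  have e3 : s(p,y) = s(p,s') ↔ y = s' := by simp [Sym2.eq_iff, hps2]
  have e4 : s(p,y) = s(q,r) ↔ False := by simp [Sym2.eq_iff, h1, hpr]
  have h5 : y = s' → p ≠ y := fun h => h ▸ hps2
  rw [swapG_adj]
  simp only [ne_eq, e1, e2, e3, e4]
  tauto

lemma swapG_adj_q (h1 : p ≠ q) (hqr : q ≠ r) (hqs : q ≠ s') (y : V) :
    (swapG G p q r s').Adj q y ↔ (G.Adj q y ∧ y ≠ p) ∨ y = r := by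
  have e1 : s(q,y) = s(p,q) ↔ y = p := by simp [Sym2.eq_iff, h1.symm]
  have e2 : s(q,y) = s(r,s') ↔ False := by simp [Sym2.eq_iff, hqr, hqs]
  have e3 : s(q,y) = s(p,s') ↔ False := by simp [Sym2.eq_iff, h1.symm, hqs]
  have e4 : s(q,y) = s(q,r) ↔ y = r := by simp [Sym2.eq_iff, hqr]
  have h5 : y = r → q ≠ y := fun h => h ▸ hqr
  rw [swapG_adj]
  simp only [ne_eq, e1, e2, e3, e4]
  tauto

lemma swapG_adj_r (h2 : r ≠ s') (hpr : p ≠ r) (hqr : q ≠ r) (y : V) :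
    (swapG G p q r s').Adj r y ↔ (G.Adj r y ∧ y ≠ s') ∨ y = q := by
  have e1 : s(r,y) = s(p,q) ↔ False := by simp [Sym2.eq_iff, hpr.symm, hqr.symm]
  have e2 : s(r,y) = s(r,s') ↔ y = s' := by simp [Sym2.eq_iff, h2]
  have e3 : s(r,y) = s(p,s') ↔ False := by simp [Sym2.eq_iff, hpr.symm, h2]
  have e4 : s(r,y) = s(q,r) ↔ y = q := by simp [Sym2.eq_iff, hqr.symm]
  have h5 : y = q → r ≠ y := fun h => h ▸ hqr.symm
  rw [swapG_adj]
  simp only [ne_eq, e1, e2, e3, e4]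
  tauto

lemma swapG_adj_s (h2 : r ≠ s') (hps2 : p ≠ s') (hqs : q ≠ s') (y : V) :
    (swapG G p q r s').Adj s' y ↔ (G.Adj s' y ∧ y ≠ r) ∨ y = p := by
  have e1 : s(s',y) = s(p,q) ↔ False := by simp [Sym2.eq_iff, hps2.symm, hqs.symm]
  have e2 : s(s',y) = s(r,s') ↔ y = r := by simp [Sym2.eq_iff, h2.symm]
  have e3 : s(s',y) = s(p,s') ↔ y = p := by simp [Sym2.eq_iff, hps2.symm]
  have e4 : s(s',y) = s(q,r) ↔ False := by simp [Sym2.eq_iff, hqs.symm, h2.symm]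
  have h5 : y = p → s' ≠ y := fun h => h ▸ hps2.symm
  rw [swapG_adj]
  simp only [ne_eq, e1, e2, e3, e4]
  tauto

lemma swapG_adj_other {v : V} (hp : v ≠ p) (hq : v ≠ q) (hr : v ≠ r) (hs : v ≠ s') (y : V) :
    (swapG G p q r s').Adj v y ↔ G.Adj v y := by
  have e1 : s(v,y) = s(p,q) ↔ False := by simp [Sym2.eq_iff, hp, hq]
  have e2 : s(v,y) = s(r,s') ↔ False := by simp [Sym2.eq_iff, hr, hs]
  have e3 : s(v,y) = s(p,s') ↔ False := by simp [Sym2.eq_iff, hp, hs]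
  have e4 : s(v,y) = s(q,r) ↔ False := by simp [Sym2.eq_iff, hq, hr]
  rw [swapG_adj]
  simp only [ne_eq, e1, e2, e3, e4]
  tauto

end

open scoped Classical in
lemma swap_deg {n : ℕ} (G : SimpleGraph (Fin n)) (p q r s' : Fin n)
    (hpq : G.Adj p q) (hrs : G.Adj r s') (hps : ¬ G.Adj p s') (hqr : ¬ G.Adj q r)
    (hpr : p ≠ r) (hqs : q ≠ s') (hps2 : p ≠ s') (hqr2 : q ≠ r) (v : Fin n) :
    deg (swapG G p q r s') v = deg G v := by
  have h1 : p ≠ q := hpq.ne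
  have h2 : r ≠ s' := hrs.ne
  rw [deg_eq_card, deg_eq_card]
  by_cases hvp : v = p
  · subst hvp
    exact card_swap_filter (G.Adj v) _ q s' hpq hps (swapG_adj_p G v q r s' h1 hpr hps2)
  by_cases hvq : v = q
  · subst hvq
    exact card_swap_filter (G.Adj v) _ p r hpq.symm hqr (swapG_adj_q G p v r s' h1 hqr2 hqs)
  by_cases hvr : v = r
  · subst hvr
    exact card_swap_filter (G.Adj v) _ s' q hrs (fun h => hqr h.symm)
      (swapG_adj_r G p q v s' h2 hpr hqr2)
  by_cases hvs : v = s'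
  · subst hvs
    exact card_swap_filter (G.Adj v) _ r p hrs.symm (fun h => hps h.symm)
      (swapG_adj_s G p q r v h2 hps2 hqs)
  · congr 1
    ext y
    simp only [mem_filter, mem_univ, true_and]
    exact swapG_adj_other G p q r s' hvp hvq hvr hvs y

lemma card_T {n K : ℕ} (h : K < n) :
    (univ.filter (fun i : Fin n => (i : ℕ) ≤ K)).card = K + 1 := by
  have : (univ.filter (fun i : Fin n => (i : ℕ) ≤ K)) =
      (univ : Finset (Fin (K+1))).image (Fin.castLE h) := by
    ext i
    simp only [mem_filter, mem_univ, true_and, mem_image]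
    constructor
    · intro hi; exact ⟨⟨i, Nat.lt_succ_of_le hi⟩, rfl⟩
    · rintro ⟨m, rfl⟩; exact Nat.lt_succ_iff.mp m.isLt
  rw [this, Finset.card_image_of_injective _ (Fin.castLE_injective h)]
  simp

open scoped Classical in
lemma nested {n : ℕ} (G : SimpleGraph (Fin n)) (d : Fin n → ℕ)
    (hdeg : ∀ i, deg G i = d i)
    (huniq : ∀ H : SimpleGraph (Fin n), (∀ i, deg H i = d i) → H = G)
    {i c : Fin n} (hdc : d c ≤ d i) (hne : i ≠ c)
    {x : Fin n} (hadj : G.Adj c x) (hxi : x ≠ i) : G.Adj i x := by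
  by_contra hix
  set Ni := univ.filter (fun w => G.Adj i w) with hNi
  set Nc := univ.filter (fun w => G.Adj c w) with hNc
  have cNi : Ni.card = d i := by rw [hNi, ← deg_eq_card, hdeg]
  have cNc : Nc.card = d c := by rw [hNc, ← deg_eq_card, hdeg]
  have hcard : (Nc.erase i).card ≤ (Ni.erase c).card := by
    by_cases hic : G.Adj i c
    · have h1 : c ∈ Ni := by simp [hNi, hic]
      have h2 : i ∈ Nc := by simp [hNc, hic.symm]
      rw [Finset.card_erase_of_mem h1, Finset.card_erase_of_mem h2, cNi, cNc]
      omega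
    · have h1 : c ∉ Ni := by simp [hNi, hic]
      have h2 : i ∉ Nc := by simp [hNc]; exact fun h => hic h.symm
      rw [Finset.erase_eq_of_notMem h1, Finset.erase_eq_of_notMem h2, cNi, cNc]
      exact hdc
  have hxB : x ∈ Nc.erase i := by
    simp [hNc, Finset.mem_erase, hxi, hadj]
  have hxA : x ∉ Ni.erase c := by
    simp only [Finset.mem_erase, hNi, mem_filter, mem_univ, true_and]
    exact fun h => hix h.2
  -- find e ∈ Ni.erase c \ Nc.erase i
  have hex : ∃ e, e ∈ Ni.erase c ∧ e ∉ Nc.erase i := by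
    by_contra hcon
    push_neg at hcon
    have hsub : Ni.erase c ⊆ (Nc.erase i).erase x := by
      intro e he
      exact Finset.mem_erase.mpr ⟨fun h => hxA (h ▸ he), hcon e he⟩
    have := Finset.card_le_card hsub
    rw [Finset.card_erase_of_mem hxB] at this
    have hpos : 1 ≤ (Nc.erase i).card := Finset.card_pos.mpr ⟨x, hxB⟩
    omega
  obtain ⟨e, heA, heB⟩ := hex
  obtain ⟨hec, hie⟩ : e ≠ c ∧ G.Adj i e := by
    have := Finset.mem_erase.mp heA
    exact ⟨this.1, by simpa [hNi] using this.2⟩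
  have hce : ¬ G.Adj c e := by
    intro h
    exact heB (Finset.mem_erase.mpr ⟨fun hh => G.loopless.irrefl i (hh ▸ hie), by simp [hNc, h]⟩)
  -- swap p=i q=e r=c s'=x
  have hix' : ¬ G.Adj i x := hix
  have hec' : ¬ G.Adj e c := fun h => hce h.symm
  have hiex : e ≠ x := fun h => hix (h ▸ hie)
  have H := swapG G i e c x
  have hdH : ∀ v, deg (swapG G i e c x) v = d v := fun v =>
    (swap_deg G i e c x hie hadj hix' hec' hne hiex (Ne.symm hxi) hec v).trans (hdeg v)
  have hHG := huniq _ hdH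
  have : (swapG G i e c x).Adj i x := by
    rw [swapG_adj]
    exact Or.inr ⟨Or.inl rfl, Ne.symm hxi⟩
  rw [hHG] at this
  exact hix this

open scoped Classical in
lemma structure_of_nested {n : ℕ} (G : SimpleGraph (Fin n)) (d : Fin n → ℕ)
    (hdeg : ∀ i, deg G i = d i) (hmono : Antitone d)
    (hnest : ∀ ⦃i c : Fin n⦄, d c ≤ d i → i ≠ c → ∀ ⦃x : Fin n⦄, G.Adj c x → x ≠ i → G.Adj i x)
    (k : Fin n) (hk : (k : ℕ) ≤ d k) :
    (∀ i j : Fin n, (i : ℕ) ≤ (k : ℕ) → (j : ℕ) ≤ (k : ℕ) → i ≠ j → G.Adj i j) ∧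
    (∀ c : Fin n, (k : ℕ) < (c : ℕ) →
      (univ.filter (fun j : Fin n => (j : ℕ) ≤ (k : ℕ) ∧ G.Adj c j)).card
        = min ((k : ℕ) + 1) (d c)) := by
  set K := (k : ℕ) with hK
  have hKn : K < n := k.isLt
  have hmono' : ∀ {a b : Fin n}, (a : ℕ) ≤ (b : ℕ) → d b ≤ d a := fun h => hmono h
  constructor
  · -- clique
    intro i j hi hj hij
    by_contra hadj
    have hdj : K ≤ d j := le_trans hk (hmono' hj)
    have hNj : (univ.filter (fun w => G.Adj j w)).card = d j := by
      rw [← deg_eq_card, hdeg]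
    -- find c ∈ N(j) outside T \ {i, j}
    have hsub : ¬ (univ.filter (fun w => G.Adj j w) ⊆
        ((univ.filter (fun x : Fin n => (x : ℕ) ≤ K)).erase i).erase j) := by
      intro hsb
      have hiT : i ∈ univ.filter (fun x : Fin n => (x : ℕ) ≤ K) := by simp [hi]
      have hjT : j ∈ (univ.filter (fun x : Fin n => (x : ℕ) ≤ K)).erase i := by
        simp [hj, Ne.symm hij]
      have hle := Finset.card_le_card hsb
      rw [Finset.card_erase_of_mem hjT, Finset.card_erase_of_mem hiT, card_T hKn, hNj] at hle
      omega
    obtain ⟨c, hcN, hcT⟩ := Finset.not_subset.mp hsub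
    have hjc : G.Adj j c := by simpa using hcN
    have hci : c ≠ i := fun h => hadj ((h ▸ hjc).symm)
    have hcj : c ≠ j := fun h => G.loopless.irrefl j (h ▸ hjc)
    have hcK : K < (c : ℕ) := by
      by_contra hle
      push_neg at hle
      exact hcT (by simp [Finset.mem_erase, hcj, hci, hle])
    have hdci : d c ≤ d i := hmono' (le_trans hi (le_of_lt hcK))
    exact hadj (hnest hdci (fun h => by omega) hjc.symm (Ne.symm hij))
  · -- min count
    intro c hc
    have hNc : (univ.filter (fun w => G.Adj c w)).card = d c := by
      rw [← deg_eq_card, hdeg]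
    rcases le_or_gt (K + 1) (d c) with hbig | hsmall
    · -- c adjacent to all of T
      have hall : ∀ j : Fin n, (j : ℕ) ≤ K → G.Adj c j := by
        intro j hj
        by_contra hadj
        have hsub : ¬ (univ.filter (fun w => G.Adj c w) ⊆
            (univ.filter (fun x : Fin n => (x : ℕ) ≤ K)).erase j) := by
          intro hsb
          have hjT : j ∈ univ.filter (fun x : Fin n => (x : ℕ) ≤ K) := by simp [hj]
          have hle := Finset.card_le_card hsb
          rw [Finset.card_erase_of_mem hjT, card_T hKn, hNc] at hle
          omega
        obtain ⟨x, hxN, hxT⟩ := Finset.not_subset.mp hsub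
        have hcx : G.Adj c x := by simpa using hxN
        have hxj : x ≠ j := fun h => hadj (h ▸ hcx)
        have hxK : K < (x : ℕ) := by
          by_contra hle
          push_neg at hle
          exact hxT (by simp [Finset.mem_erase, hxj, hle])
        have hcj2 : c ≠ j := fun h => by rw [h] at hc; omega
        exact hadj (hnest (hmono' (le_trans hj (le_of_lt hxK)))
          (fun h => by omega) hcx.symm hcj2).symm
      have hset : univ.filter (fun j : Fin n => (j : ℕ) ≤ K ∧ G.Adj c j)
          = univ.filter (fun j : Fin n => (j : ℕ) ≤ K) := by
        ext j
        simp only [mem_filter, mem_univ, true_and]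
        exact ⟨fun h => h.1, fun h => ⟨h, hall j h⟩⟩
      rw [hset, card_T hKn, min_eq_left hbig]
    · -- all neighbors of c lie in T
      have hall : ∀ x : Fin n, G.Adj c x → (x : ℕ) ≤ K := by
        intro x hcx
        by_contra hxK
        push_neg at hxK
        have hTsub : insert x (univ.filter (fun j : Fin n => (j : ℕ) ≤ K))
            ⊆ univ.filter (fun w => G.Adj c w) := by
          intro j hjmem
          rcases Finset.mem_insert.mp hjmem with rfl | hjT
          · simp [hcx]
          · have hj : (j : ℕ) ≤ K := by simpa using hjT
            have hadj : G.Adj c j := by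
              have hcj : c ≠ j := fun h => by rw [h] at hc; omega
              exact (hnest (hmono' (le_trans hj (le_of_lt hxK)))
                (fun h => by omega) hcx.symm hcj).symm
            simp [hadj]
        have hxnot : x ∉ univ.filter (fun j : Fin n => (j : ℕ) ≤ K) := by simp; omega
        have hle := Finset.card_le_card hTsub
        rw [Finset.card_insert_of_notMem hxnot, card_T hKn, hNc] at hle
        omega
      have hset : univ.filter (fun j : Fin n => (j : ℕ) ≤ K ∧ G.Adj c j)
          = univ.filter (fun w => G.Adj c w) := by
        ext j
        simp only [mem_filter, mem_univ, true_and]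
        exact ⟨fun h => h.2, fun h => ⟨hall j h, h⟩⟩
      rw [hset, hNc, min_eq_right (by omega)]

open scoped Classical in
lemma decomp {n : ℕ} (H : SimpleGraph (Fin n)) (K : ℕ) :
    ∑ i ∈ univ.filter (fun i : Fin n => (i : ℕ) ≤ K), deg H i
      = (∑ i ∈ univ.filter (fun i : Fin n => (i : ℕ) ≤ K),
          (univ.filter (fun j : Fin n => (j : ℕ) ≤ K ∧ H.Adj i j)).card)
      + ∑ c ∈ univ.filter (fun c : Fin n => K < (c : ℕ)),
          (univ.filter (fun j : Fin n => (j : ℕ) ≤ K ∧ H.Adj c j)).card := by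
  have hsplit : ∀ i : Fin n, deg H i
      = (univ.filter (fun j : Fin n => (j : ℕ) ≤ K ∧ H.Adj i j)).card
      + (univ.filter (fun j : Fin n => K < (j : ℕ) ∧ H.Adj i j)).card := by
    intro i
    rw [deg_eq_card]
    rw [← Finset.card_union_of_disjoint]
    · congr 1
      ext j
      simp only [mem_filter, mem_univ, true_and, mem_union]
      constructor
      · intro h
        rcases le_or_gt (j : ℕ) K with h' | h'
        · exact Or.inl ⟨h', h⟩
        · exact Or.inr ⟨h', h⟩
      · rintro (⟨-, h⟩ | ⟨-, h⟩) <;> exact h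
    · rw [Finset.disjoint_left]
      intro a ha hb
      simp only [mem_filter] at ha hb
      omega
  rw [Finset.sum_congr rfl (fun i _ => hsplit i), Finset.sum_add_distrib]
  congr 1
  -- cross-count swap
  have hcount : ∀ i : Fin n, (univ.filter (fun j : Fin n => K < (j : ℕ) ∧ H.Adj i j)).card
      = ∑ c ∈ univ.filter (fun c : Fin n => K < (c : ℕ)), if H.Adj i c then 1 else 0 := by
    intro i
    rw [← Finset.filter_filter, Finset.card_filter]
  have hcount2 : ∀ c : Fin n, (univ.filter (fun j : Fin n => (j : ℕ) ≤ K ∧ H.Adj c j)).card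
      = ∑ i ∈ univ.filter (fun i : Fin n => (i : ℕ) ≤ K), if H.Adj c i then 1 else 0 := by
    intro c
    rw [← Finset.filter_filter, Finset.card_filter]
  rw [Finset.sum_congr rfl (fun i _ => hcount i),
      Finset.sum_congr rfl (fun c _ => hcount2 c), Finset.sum_comm]
  refine Finset.sum_congr rfl fun c _ => Finset.sum_congr rfl fun i _ => ?_
  simp only [H.adj_comm]

open scoped Classical in
lemma structure_of_eq {n : ℕ} (H : SimpleGraph (Fin n)) (d : Fin n → ℕ)
    (hdeg : ∀ i, deg H i = d i) (k : Fin n)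
    (heq : ∑ i ∈ Finset.univ.filter (fun i : Fin n => (i : ℕ) ≤ (k : ℕ)), d i =
          ((k : ℕ) + 1) * (k : ℕ) +
            ∑ i ∈ Finset.univ.filter (fun i : Fin n => (k : ℕ) < (i : ℕ)),
              min ((k : ℕ) + 1) (d i)) :
    (∀ i j : Fin n, (i : ℕ) ≤ (k : ℕ) → (j : ℕ) ≤ (k : ℕ) → i ≠ j → H.Adj i j) ∧
    (∀ c : Fin n, (k : ℕ) < (c : ℕ) →
      (univ.filter (fun j : Fin n => (j : ℕ) ≤ (k : ℕ) ∧ H.Adj c j)).card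
        = min ((k : ℕ) + 1) (d c)) := by
  set K := (k : ℕ) with hK
  have hKn : K < n := k.isLt
  set T := univ.filter (fun i : Fin n => (i : ℕ) ≤ K) with hT
  set T' := univ.filter (fun c : Fin n => K < (c : ℕ)) with hT'
  -- termwise bounds
  have hboundA : ∀ i ∈ T, (univ.filter (fun j : Fin n => (j : ℕ) ≤ K ∧ H.Adj i j)).card ≤ K := by
    intro i hi
    have hsub : univ.filter (fun j : Fin n => (j : ℕ) ≤ K ∧ H.Adj i j) ⊆ T.erase i := by
      intro j hj
      simp only [mem_filter, mem_univ, true_and] at hj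
      refine Finset.mem_erase.mpr ⟨fun h => H.loopless.irrefl i (h ▸ hj.2), ?_⟩
      simp [hT, hj.1]
    have := Finset.card_le_card hsub
    rwa [Finset.card_erase_of_mem hi, hT, card_T hKn, Nat.add_sub_cancel] at this
  have hboundB : ∀ c ∈ T', (univ.filter (fun j : Fin n => (j : ℕ) ≤ K ∧ H.Adj c j)).card
      ≤ min (K + 1) (d c) := by
    intro c _
    refine le_min ?_ ?_
    · calc (univ.filter (fun j : Fin n => (j : ℕ) ≤ K ∧ H.Adj c j)).card
          ≤ T.card := Finset.card_le_card (fun j hj => by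
            simp only [hT, mem_filter, mem_univ, true_and] at hj ⊢; exact hj.1)
        _ = K + 1 := by rw [hT, card_T hKn]
    · calc (univ.filter (fun j : Fin n => (j : ℕ) ≤ K ∧ H.Adj c j)).card
          ≤ (univ.filter (fun w => H.Adj c w)).card := Finset.card_le_card (fun j hj => by
            simp only [mem_filter, mem_univ, true_and] at hj ⊢; exact hj.2)
        _ = d c := by rw [← deg_eq_card, hdeg]
  -- the two sums
  have hdecomp := decomp H K
  rw [← hT, ← hT'] at hdecomp
  rw [Finset.sum_congr rfl (fun i (_ : i ∈ T) => hdeg i)] at hdecomp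
  have hsumA : ∑ i ∈ T, (univ.filter (fun j : Fin n => (j : ℕ) ≤ K ∧ H.Adj i j)).card
      ≤ (K + 1) * K := by
    calc _ ≤ ∑ _i ∈ T, K := Finset.sum_le_sum hboundA
    _ = (K + 1) * K := by rw [Finset.sum_const, hT, card_T hKn, smul_eq_mul]
  have hsumB : ∑ c ∈ T', (univ.filter (fun j : Fin n => (j : ℕ) ≤ K ∧ H.Adj c j)).card
      ≤ ∑ c ∈ T', min (K + 1) (d c) := Finset.sum_le_sum hboundB
  have hAeq : ∑ i ∈ T, (univ.filter (fun j : Fin n => (j : ℕ) ≤ K ∧ H.Adj i j)).card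
      = (K + 1) * K := by
    have key := hdecomp.symm.trans heq
    omega
  have hBeq : ∑ c ∈ T', (univ.filter (fun j : Fin n => (j : ℕ) ≤ K ∧ H.Adj c j)).card
      = ∑ c ∈ T', min (K + 1) (d c) := by
    have key := hdecomp.symm.trans heq
    omega
  -- termwise equalities
  have hAterm : ∀ i ∈ T, (univ.filter (fun j : Fin n => (j : ℕ) ≤ K ∧ H.Adj i j)).card = K := by
    have : ∑ i ∈ T, (univ.filter (fun j : Fin n => (j : ℕ) ≤ K ∧ H.Adj i j)).card
        = ∑ _i ∈ T, K := by
      rw [hAeq, Finset.sum_const, hT, card_T hKn, smul_eq_mul]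
    exact fun i hi => (Finset.sum_eq_sum_iff_of_le hboundA).mp this i hi
  have hBterm := (Finset.sum_eq_sum_iff_of_le hboundB).mp hBeq
  constructor
  · intro i j hi hj hij
    have hiT : i ∈ T := by simp [hT, hi]
    have hsub : univ.filter (fun x : Fin n => (x : ℕ) ≤ K ∧ H.Adj i x) ⊆ T.erase i := by
      intro x hx
      simp only [mem_filter, mem_univ, true_and] at hx
      exact Finset.mem_erase.mpr ⟨fun h => H.loopless.irrefl i (h ▸ hx.2), by simp [hT, hx.1]⟩
    have hcards : (T.erase i).card ≤ (univ.filter (fun x : Fin n => (x : ℕ) ≤ K ∧ H.Adj i x)).card := by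
      rw [Finset.card_erase_of_mem hiT, hT, card_T hKn, Nat.add_sub_cancel, hAterm i hiT]
    have hfin := Finset.eq_of_subset_of_card_le hsub hcards
    have hjmem : j ∈ T.erase i := Finset.mem_erase.mpr ⟨Ne.symm hij, by simp [hT, hj]⟩
    rw [← hfin] at hjmem
    simp only [mem_filter, mem_univ, true_and] at hjmem
    exact hjmem.2
  · intro c hc
    exact hBterm c (by simp [hT', hc])

open scoped Classical in
lemma adj_char {n : ℕ} (H : SimpleGraph (Fin n)) (d : Fin n → ℕ)
    (hdeg : ∀ i, deg H i = d i) (hmono : Antitone d)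
    (hstruct : ∀ k : Fin n, (k : ℕ) ≤ d k →
      (∀ i j : Fin n, (i : ℕ) ≤ (k : ℕ) → (j : ℕ) ≤ (k : ℕ) → i ≠ j → H.Adj i j) ∧
      (∀ c : Fin n, (k : ℕ) < (c : ℕ) →
        (univ.filter (fun j : Fin n => (j : ℕ) ≤ (k : ℕ) ∧ H.Adj c j)).card
          = min ((k : ℕ) + 1) (d c)))
    (i j : Fin n) (hij : (i : ℕ) < (j : ℕ)) :
    H.Adj i j ↔ ((i : ℕ) ≤ d i ∧ (i : ℕ) + 1 ≤ d j) := by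
  -- helper: full adjacency to the top from the min-count
  have hfull : ∀ k : Fin n, (k : ℕ) ≤ d k → ∀ c : Fin n, (k : ℕ) < (c : ℕ) →
      (k : ℕ) + 1 ≤ d c → ∀ x : Fin n, (x : ℕ) ≤ (k : ℕ) → H.Adj c x := by
    intro k hk c hc hdc x hx
    have hmin := (hstruct k hk).2 c hc
    rw [min_eq_left hdc] at hmin
    have hsub : univ.filter (fun y : Fin n => (y : ℕ) ≤ (k : ℕ) ∧ H.Adj c y)
        ⊆ univ.filter (fun y : Fin n => (y : ℕ) ≤ (k : ℕ)) := by
      intro y hy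
      simp only [mem_filter, mem_univ, true_and] at hy ⊢
      exact hy.1
    have hcard : (univ.filter (fun y : Fin n => (y : ℕ) ≤ (k : ℕ))).card
        ≤ (univ.filter (fun y : Fin n => (y : ℕ) ≤ (k : ℕ) ∧ H.Adj c y)).card := by
      rw [hmin, card_T k.isLt]
    have heqset := Finset.eq_of_subset_of_card_le hsub hcard
    have : x ∈ univ.filter (fun y : Fin n => (y : ℕ) ≤ (k : ℕ)) := by
      simp only [mem_filter, mem_univ, true_and]; exact hx
    rw [← heqset] at this
    simp only [mem_filter, mem_univ, true_and] at this
    exact this.2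
  -- helper: neighbors confined to the top from the min-count
  have hconf : ∀ k : Fin n, (k : ℕ) ≤ d k → ∀ c : Fin n, (k : ℕ) < (c : ℕ) →
      d c ≤ (k : ℕ) + 1 → ∀ x : Fin n, H.Adj c x → (x : ℕ) ≤ (k : ℕ) := by
    intro k hk c hc hdc x hx
    have hmin := (hstruct k hk).2 c hc
    rw [min_eq_right hdc] at hmin
    have hsub : univ.filter (fun y : Fin n => (y : ℕ) ≤ (k : ℕ) ∧ H.Adj c y)
        ⊆ univ.filter (fun y => H.Adj c y) := by
      intro y hy
      simp only [mem_filter, mem_univ, true_and] at hy ⊢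
      exact hy.2
    have hcard : (univ.filter (fun y => H.Adj c y)).card
        ≤ (univ.filter (fun y : Fin n => (y : ℕ) ≤ (k : ℕ) ∧ H.Adj c y)).card := by
      rw [hmin, ← deg_eq_card, hdeg]
    have heqset := Finset.eq_of_subset_of_card_le hsub hcard
    have : x ∈ univ.filter (fun y => H.Adj c y) := by simp [hx]
    rw [← heqset] at this
    simp only [mem_filter, mem_univ, true_and] at this
    exact this.1
  by_cases hdi : (i : ℕ) ≤ d i
  · by_cases hdj : (i : ℕ) + 1 ≤ d j
    · refine iff_of_true ?_ ⟨hdi, hdj⟩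
      exact (hfull i hdi j hij hdj i le_rfl).symm
    · push_neg at hdj
      refine iff_of_false ?_ (fun h => by omega)
      rcases Nat.eq_zero_or_pos (i : ℕ) with hzero | hpos
      · -- d j = 0
        have hdj0 : d j = 0 := by omega
        intro hadj
        have h1 : i ∈ univ.filter (fun w => H.Adj j w) := by simp [hadj.symm]
        have : 1 ≤ (univ.filter (fun w => H.Adj j w)).card :=
          Finset.card_pos.mpr ⟨i, h1⟩
        rw [← deg_eq_card, hdeg, hdj0] at this
        omega
      · set k : Fin n := ⟨(i : ℕ) - 1, by omega⟩ with hk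
        have hkval : (k : ℕ) = (i : ℕ) - 1 := rfl
        have hkd : (k : ℕ) ≤ d k := by
          have : d i ≤ d k := hmono (Fin.le_def.mpr (by omega))
          omega
        intro hadj
        have := hconf k hkd j (by omega) (by omega) i hadj.symm
        omega
  · refine iff_of_false ?_ (fun h => by omega)
    push_neg at hdi
    -- maximal valid index m
    set Vs := univ.filter (fun a : Fin n => (a : ℕ) ≤ d a) with hVs
    have hz : (⟨0, lt_of_le_of_lt (Nat.zero_le _) i.isLt⟩ : Fin n) ∈ Vs := by
      simp [hVs]
    have hVsne : Vs.Nonempty := ⟨_, hz⟩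
    set m := Vs.max' hVsne with hm
    have hmmem : m ∈ Vs := Vs.max'_mem hVsne
    have hmd : (m : ℕ) ≤ d m := by simpa [hVs] using hmmem
    have hmax : ∀ a ∈ Vs, a ≤ m := fun a ha => Vs.le_max' a ha
    have hmi : (m : ℕ) < (i : ℕ) := by
      by_contra hle
      push_neg at hle
      have : d m ≤ d i := hmono (Fin.le_def.mpr hle)
      omega
    set w : Fin n := ⟨(m : ℕ) + 1, by omega⟩ with hw
    have hwv : (w : ℕ) = (m : ℕ) + 1 := rfl
    have hwnot : w ∉ Vs := by
      intro hmem
      have := hmax w hmem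
      rw [Fin.le_def, hwv] at this
      omega
    have hdw : d w ≤ (m : ℕ) := by
      by_contra hgt
      push_neg at hgt
      refine hwnot ?_
      simp only [hVs, mem_filter, mem_univ, true_and, hwv]
      omega
    have hdj : d j ≤ (m : ℕ) + 1 := by
      have : d j ≤ d w := hmono (Fin.le_def.mpr (by rw [hwv]; omega))
      omega
    intro hadj
    have := hconf m hmd j (by omega) hdj i hadj.symm
    omega

open scoped Classical in
lemma eq_of_structure {n : ℕ} (G : SimpleGraph (Fin n)) (d : Fin n → ℕ)
    (hdeg : ∀ i, deg G i = d i) (k : Fin n)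
    (hclique : ∀ i j : Fin n, (i : ℕ) ≤ (k : ℕ) → (j : ℕ) ≤ (k : ℕ) → i ≠ j → G.Adj i j)
    (hmin : ∀ c : Fin n, (k : ℕ) < (c : ℕ) →
      (univ.filter (fun j : Fin n => (j : ℕ) ≤ (k : ℕ) ∧ G.Adj c j)).card
        = min ((k : ℕ) + 1) (d c)) :
    ∑ i ∈ Finset.univ.filter (fun i : Fin n => (i : ℕ) ≤ (k : ℕ)), d i =
      ((k : ℕ) + 1) * (k : ℕ) +
        ∑ i ∈ Finset.univ.filter (fun i : Fin n => (k : ℕ) < (i : ℕ)),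
          min ((k : ℕ) + 1) (d i) := by
  have hdecomp := decomp G (k : ℕ)
  rw [Finset.sum_congr rfl (fun i _ => hdeg i)] at hdecomp
  rw [hdecomp]
  congr 1
  · -- A = (k+1)*k
    have hterm : ∀ i ∈ univ.filter (fun i : Fin n => (i : ℕ) ≤ (k : ℕ)),
        (univ.filter (fun j : Fin n => (j : ℕ) ≤ (k : ℕ) ∧ G.Adj i j)).card = (k : ℕ) := by
      intro i hi
      simp only [mem_filter, mem_univ, true_and] at hi
      have hset : univ.filter (fun j : Fin n => (j : ℕ) ≤ (k : ℕ) ∧ G.Adj i j)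
          = (univ.filter (fun j : Fin n => (j : ℕ) ≤ (k : ℕ))).erase i := by
        ext j
        simp only [mem_filter, mem_univ, true_and, Finset.mem_erase]
        constructor
        · rintro ⟨h1, h2⟩
          exact ⟨fun h => G.loopless.irrefl i (h ▸ h2), h1⟩
        · rintro ⟨h1, h2⟩
          exact ⟨h2, hclique i j hi h2 (Ne.symm h1)⟩
      rw [hset, Finset.card_erase_of_mem (by simp only [mem_filter, mem_univ, true_and]; exact hi), card_T k.isLt,
        Nat.add_sub_cancel]
    rw [Finset.sum_congr rfl hterm, Finset.sum_const, card_T k.isLt, smul_eq_mul]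
  · exact Finset.sum_congr rfl fun c hc => hmin c (by simpa using hc)

/-- A graph `G` with nonincreasing degree sequence `d` is the unique labeled
realization of `d` iff the first `m(d)` Erdős–Gallai inequalities hold with
equality, where `m(d) = max {i : dᵢ ≥ i - 1}`.  Here `k : Fin n` is the `0`-indexed
version of the `1`-indexed `k + 1`, and since `d` is nonincreasing, `k + 1 ≤ m(d)`
is equivalent to `d k ≥ k` (`0`-indexed). -/
theorem stmt11 (n : ℕ) (G : SimpleGraph (Fin n)) (d : Fin n → ℕ)
    (hdeg : ∀ i, deg G i = d i) (hmono : Antitone d) :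
    (∀ H : SimpleGraph (Fin n), (∀ i, deg H i = d i) → H = G) ↔
      ∀ k : Fin n, (k : ℕ) ≤ d k →
        ∑ i ∈ Finset.univ.filter (fun i : Fin n => (i : ℕ) ≤ (k : ℕ)), d i =
          ((k : ℕ) + 1) * (k : ℕ) +
            ∑ i ∈ Finset.univ.filter (fun i : Fin n => (k : ℕ) < (i : ℕ)),
              min ((k : ℕ) + 1) (d i) := by
  constructor
  · intro huniq k hk
    have hnest : ∀ ⦃i c : Fin n⦄, d c ≤ d i → i ≠ c →
        ∀ ⦃x : Fin n⦄, G.Adj c x → x ≠ i → G.Adj i x :=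
      fun i c hdc hne x hadj hxi => nested G d hdeg huniq hdc hne hadj hxi
    obtain ⟨hclique, hmin⟩ := structure_of_nested G d hdeg hmono hnest k hk
    exact eq_of_structure G d hdeg k hclique hmin
  · intro heq H hdegH
    have hcharG := adj_char G d hdeg hmono
      (fun k hk => structure_of_eq G d hdeg k (heq k hk))
    have hcharH := adj_char H d hdegH hmono
      (fun k hk => structure_of_eq H d hdegH k (heq k hk))
    ext a b
    rcases lt_trichotomy (a : ℕ) (b : ℕ) with h | h | h
    · exact (hcharH a b h).trans (hcharG a b h).symm
    · have : a = b := Fin.ext h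
      subst this
      simp
    · rw [H.adj_comm, G.adj_comm]
      exact (hcharH b a h).trans (hcharG b a h).symm
end

section
/- Let G be a finite simple graph on vertices v_1,…,v_n with degree sequence d = (d_1,…,d_n) listed in nonincreasing order (deg_G(v_i) = d_i). Define α(d)_i = max(d_i − i + 1, 0) and β(d)_i = |{j : j > i and d_j ≥ i}| for every i ≥ 1. Then G is the only simple graph on its vertex set in which each vertex v_i has degree d_i (every graph H on the same vertex set with deg_H(v_i) = d_i for all i satisfies H = G) if and only if α(d)_i = β(d)_i for every i ≥ 1. -/
attribute [local instance] Classical.propDecidable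
set_option linter.unusedSectionVars false
set_option maxHeartbeats 1000000
open Finset

lemma deg_eq_degree {V : Type*} [Fintype V] (G : SimpleGraph V) (v : V) :
    deg G v = (G.neighborFinset v).card := by
  rw [deg, SimpleGraph.neighborFinset_def, Set.ncard_eq_toFinset_card']

section Switch
variable {V : Type*} [Fintype V]

def switchGraph (G : SimpleGraph V) (a b c e : V) : SimpleGraph V where
  Adj x y := (G.Adj x y ∧ ¬(s(x,y) = s(a,b) ∨ s(x,y) = s(c,e))) ∨
    (x ≠ y ∧ (s(x,y) = s(a,e) ∨ s(x,y) = s(c,b)))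
  symm := by
    constructor
    intro x y h
    have hs : ∀ z w : V, s(y,x) = s(z,w) ↔ s(x,y) = s(z,w) := by
      intro z w; rw [Sym2.eq_swap]
    rcases h with ⟨h1, h2⟩ | ⟨h1, h2⟩
    · exact Or.inl ⟨h1.symm, by simpa [hs] using h2⟩
    · exact Or.inr ⟨h1.symm, by simpa [hs] using h2⟩
  loopless := by
    constructor
    intro x h
    rcases h with ⟨h1, _⟩ | ⟨h1, _⟩
    · exact G.loopless.irrefl x h1
    · exact h1 rfl

variable {G : SimpleGraph V} {a b c e : V}

structure SwitchHyp (G : SimpleGraph V) (a b c e : V) : Prop where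
  hab : G.Adj a b
  hce : G.Adj c e
  hae : ¬ G.Adj a e
  hcb : ¬ G.Adj c b
  hac : a ≠ c
  hAE : a ≠ e
  hbc : b ≠ c
  hbe : b ≠ e

lemma nbhd_a (h : SwitchHyp G a b c e) :
    (switchGraph G a b c e).neighborFinset a = insert e ((G.neighborFinset a).erase b) := by
  have hAB : a ≠ b := h.hab.ne
  have hCE : c ≠ e := h.hce.ne
  have hac := h.hac; have hAE := h.hAE; have hbc := h.hbc; have hbe := h.hbe
  ext y
  simp only [SimpleGraph.mem_neighborFinset]
  simp only [switchGraph, mem_insert, mem_erase, Sym2.eq_iff, SimpleGraph.mem_neighborFinset]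
  constructor
  · rintro (⟨h1, h2⟩ | ⟨h1, h2⟩) <;> simp_all
  · rintro (rfl | ⟨hyb, hy⟩)
    · simp_all
    · have := hy.ne
      simp_all

lemma deg_a (h : SwitchHyp G a b c e) :
    (switchGraph G a b c e).degree a = G.degree a := by
  rw [SimpleGraph.degree, SimpleGraph.degree, nbhd_a h, card_insert_of_notMem, card_erase_of_mem]
  · have hb : b ∈ G.neighborFinset a := by simpa using h.hab
    have : 1 ≤ (G.neighborFinset a).card := card_pos.2 ⟨b, hb⟩
    omega
  · simpa using h.hab
  · simp only [mem_erase, SimpleGraph.mem_neighborFinset]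
    rintro ⟨-, he⟩; exact h.hae he

lemma symm1' (h : SwitchHyp G a b c e) : SwitchHyp G c e a b :=
  ⟨h.hce, h.hab, h.hcb, h.hae, h.hac.symm, h.hbc.symm, h.hAE.symm, h.hbe.symm⟩

lemma symm2' (h : SwitchHyp G a b c e) : SwitchHyp G e c b a :=
  ⟨h.hce.symm, h.hab.symm, fun hh => h.hae hh.symm, fun hh => h.hcb hh.symm,
    h.hbe.symm, h.hAE.symm, h.hbc.symm, h.hac.symm⟩

lemma switch_eq1 : switchGraph G a b c e = switchGraph G c e a b := by
  ext x y
  simp only [switchGraph]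
  tauto

lemma switch_eq2 : switchGraph G a b c e = switchGraph G e c b a := by
  ext x y
  constructor <;>
  · rintro (⟨h1, h2⟩ | ⟨h1, h2⟩)
    · refine Or.inl ⟨h1, ?_⟩
      rw [Sym2.eq_swap (a := a) (b := b), Sym2.eq_swap (a := c) (b := e)] at *
      tauto
    · refine Or.inr ⟨h1, ?_⟩
      rw [Sym2.eq_swap (a := a) (b := e), Sym2.eq_swap (a := c) (b := b)] at *
      tauto

lemma nbhd_other (h : SwitchHyp G a b c e) {v : V}
    (ha : v ≠ a) (hb : v ≠ b) (hc : v ≠ c) (he : v ≠ e) :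
    (switchGraph G a b c e).neighborFinset v = G.neighborFinset v := by
  ext y
  simp only [SimpleGraph.mem_neighborFinset]
  simp only [switchGraph, Sym2.eq_iff]
  constructor
  · rintro (⟨h1, -⟩ | ⟨h1, h2⟩)
    · exact h1
    · exfalso; rcases h2 with (⟨rfl, -⟩ | ⟨rfl, -⟩) | (⟨rfl, -⟩ | ⟨rfl, -⟩) <;> simp_all
  · intro hy
    refine Or.inl ⟨hy, ?_⟩
    rintro ((⟨rfl, -⟩ | ⟨rfl, -⟩) | (⟨rfl, -⟩ | ⟨rfl, -⟩)) <;> simp_all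

lemma switch_degree (h : SwitchHyp G a b c e) (v : V) :
    (switchGraph G a b c e).degree v = G.degree v := by
  by_cases hva : v = a
  · subst hva; exact deg_a h
  by_cases hvc : v = c
  · subst hvc; rw [switch_eq1]; exact deg_a (symm1' h)
  by_cases hve : v = e
  · subst hve; rw [switch_eq2]; exact deg_a (symm2' h)
  by_cases hvb : v = b
  · subst hvb; rw [switch_eq2, switch_eq1]; exact deg_a (symm1' (symm2' h))
  · rw [SimpleGraph.degree, nbhd_other h hva hvb hvc hve]; rfl

lemma switch_ne (h : SwitchHyp G a b c e) : switchGraph G a b c e ≠ G := by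
  intro heq
  have : (switchGraph G a b c e).Adj a b := by rw [heq]; exact h.hab
  have hAB := h.hab.ne
  have hae := h.hAE; have hac := h.hac; have hbe := h.hbe; have hbc := h.hbc
  rcases this with ⟨-, h2⟩ | ⟨-, h2⟩
  · exact h2 (Or.inl (by simp))
  · rcases h2 with h2 | h2 <;> rw [Sym2.eq_iff] at h2 <;>
      rcases h2 with ⟨h3, h4⟩ | ⟨h3, h4⟩ <;> simp_all

end Switch

section Main
variable {n : ℕ}

lemma nesting {G : SimpleGraph (Fin n)} (hns : ∀ a b c e : Fin n, ¬ SwitchHyp G a b c e)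
    {u v : Fin n} (huv : u ≠ v) (hd : (G.neighborFinset v).card ≤ (G.neighborFinset u).card) :
    (G.neighborFinset v).erase u ⊆ G.neighborFinset u := by
  intro w hw
  by_contra hwu
  obtain ⟨hwne, hwv⟩ := Finset.mem_erase.1 hw
  have hx : ¬ ((G.neighborFinset u).erase v ⊆ (G.neighborFinset v).erase u) := by
    intro hsub
    have hss : (G.neighborFinset u).erase v ⊂ (G.neighborFinset v).erase u :=
      (Finset.ssubset_iff_of_subset hsub).2 ⟨w, hw, by simp only [Finset.mem_erase]; tauto⟩
    have hcard := Finset.card_lt_card hss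
    by_cases huv' : G.Adj v u
    · rw [Finset.card_erase_of_mem (by simpa using huv'.symm),
        Finset.card_erase_of_mem (by simpa using huv')] at hcard
      omega
    · rw [Finset.erase_eq_of_notMem (by simpa using fun h : G.Adj u v => huv' h.symm),
        Finset.erase_eq_of_notMem (by simpa using huv')] at hcard
      omega
  obtain ⟨x, hx1, hx2⟩ := Finset.not_subset.1 hx
  obtain ⟨hxv, hxu⟩ := Finset.mem_erase.1 hx1
  have hadjux : G.Adj u x := by simpa using hxu
  have hadjvw : G.Adj v w := by simpa using hwv
  have hxnv : ¬ G.Adj v x := by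
    intro h
    exact hx2 (Finset.mem_erase.2 ⟨hadjux.ne', by simpa using h⟩)
  have hxw : x ≠ w := by
    rintro rfl
    exact hwu (by simpa using hadjux)
  exact hns u x v w ⟨hadjux, hadjvw, by simpa using hwu, hxnv, huv, hwne.symm, hxv, hxw⟩

lemma card_val_lt (n m : ℕ) (hm : m ≤ n) :
    (univ.filter (fun k : Fin n => (k : ℕ) < m)).card = m := by
  have h : ∀ q ∈ Finset.range m, q < n := fun q hq => lt_of_lt_of_le (mem_range.1 hq) hm
  have : (univ.filter (fun k : Fin n => (k : ℕ) < m)) = (Finset.range m).attachFin h := by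
    ext k; simp [Finset.mem_attachFin]
  rw [this, Finset.card_attachFin, Finset.card_range]

lemma card_above (d : ℕ → ℕ) (i : Fin n) :
    (univ.filter (fun j : Fin n => i < j ∧ (i : ℕ) + 1 ≤ d ((j : ℕ) + 1))).card
      = ((Finset.Ioc ((i : ℕ) + 1) n).filter (fun q => (i : ℕ) + 1 ≤ d q)).card := by
  refine Finset.card_bij (fun j _ => (j : ℕ) + 1) ?_ ?_ ?_
  · intro j hj
    simp only [mem_filter, mem_univ, true_and] at hj
    simp only [mem_filter, mem_Ioc]
    have := Fin.lt_def.mp hj.1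
    exact ⟨⟨by omega, j.isLt⟩, hj.2⟩
  · intro j1 h1 j2 h2 hh
    exact Fin.ext (by omega)
  · intro q hq
    simp only [mem_filter, mem_Ioc] at hq
    obtain ⟨⟨h1, h2⟩, h3⟩ := hq
    have hq1 : q - 1 < n := by omega
    refine ⟨⟨q - 1, hq1⟩, ?_, by simp; omega⟩
    simp only [mem_filter, mem_univ, true_and]
    constructor
    · exact Fin.lt_def.2 (by simp; omega)
    · simpa [Nat.sub_add_cancel (by omega : 1 ≤ q)] using h3

lemma degree_split (G : SimpleGraph (Fin n)) (i : Fin n) :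
    (G.neighborFinset i).card = ((G.neighborFinset i).filter (· < i)).card
      + ((G.neighborFinset i).filter (i < ·)).card := by
  rw [← Finset.card_filter_add_card_filter_not (s := G.neighborFinset i) (p := (· < i))]
  congr 1
  apply congrArg
  ext k
  simp only [mem_filter, SimpleGraph.mem_neighborFinset]
  constructor
  · rintro ⟨hk, hlt⟩
    exact ⟨hk, lt_of_le_of_ne (not_lt.1 hlt) hk.ne⟩
  · rintro ⟨hk, hlt⟩
    exact ⟨hk, not_lt.2 hlt.le⟩

def Rule (G : SimpleGraph (Fin n)) (d : ℕ → ℕ) (i : Fin n) : Prop :=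
  ∀ j : Fin n, i < j → (G.Adj i j ↔ (i : ℕ) + 1 ≤ d ((j : ℕ) + 1))

lemma below_card {G : SimpleGraph (Fin n)} {d : ℕ → ℕ} (i : Fin n)
    (hIH : ∀ k : Fin n, k < i → Rule G d k) :
    ((G.neighborFinset i).filter (· < i)).card = min (i : ℕ) (d ((i : ℕ) + 1)) := by
  have heq : (G.neighborFinset i).filter (· < i)
      = univ.filter (fun k : Fin n => (k : ℕ) < min (i : ℕ) (d ((i : ℕ) + 1))) := by
    ext k
    simp only [mem_filter, SimpleGraph.mem_neighborFinset, mem_univ, true_and, lt_min_iff]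
    constructor
    · rintro ⟨hadj, hki⟩
      have hr := (hIH k hki i hki).1 hadj.symm
      exact ⟨Fin.lt_def.1 hki, by omega⟩
    · rintro ⟨h1, h2⟩
      have hki : k < i := Fin.lt_def.2 h1
      exact ⟨((hIH k hki i hki).2 (by omega)).symm, hki⟩
  rw [heq, card_val_lt]
  exact le_trans (min_le_left _ _) i.isLt.le

lemma rule_of_ab (d : ℕ → ℕ) (H : SimpleGraph (Fin n))
    (hdegH : ∀ i : Fin n, (H.neighborFinset i).card = d ((i : ℕ) + 1))
    (hab : ∀ p : ℕ, 1 ≤ p → d p + 1 - p = ((Finset.Ioc p n).filter (fun q => p ≤ d q)).card) :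
    ∀ i : Fin n, Rule H d i := by
  have main : ∀ m : ℕ, ∀ i : Fin n, (i : ℕ) < m → Rule H d i := by
    intro m
    induction m with
    | zero => exact fun i h => absurd h (Nat.not_lt_zero _)
    | succ m ih =>
      intro i him
      by_cases hcase : (i : ℕ) < m
      · exact ih i hcase
      have hIH : ∀ k : Fin n, k < i → Rule H d k := fun k hk =>
        ih k (by have := Fin.lt_def.1 hk; omega)
      have claim2 : ∀ j : Fin n, i < j → H.Adj i j → (i : ℕ) + 1 ≤ d ((j : ℕ) + 1) := by
        intro j hij hadj
        by_contra hle
        have hdji : d ((j : ℕ) + 1) ≤ (i : ℕ) := by omega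
        have hsub : insert i (univ.filter (fun k : Fin n => (k : ℕ) < d ((j : ℕ) + 1)))
            ⊆ H.neighborFinset j := by
          intro k hk
          rcases Finset.mem_insert.1 hk with rfl | hk
          · simpa using hadj.symm
          · simp only [mem_filter, mem_univ, true_and] at hk
            have hki : k < i := Fin.lt_def.2 (by omega)
            have hkj : k < j := hki.trans hij
            have := (hIH k hki j hkj).2 (by omega)
            simpa using this.symm
        have hcard : (insert i (univ.filter (fun k : Fin n => (k : ℕ) < d ((j : ℕ) + 1)))).card
            = d ((j : ℕ) + 1) + 1 := by
          rw [Finset.card_insert_of_notMem (by simp; omega), card_val_lt _ _ (by omega)]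
        have hle2 := Finset.card_le_card hsub
        rw [hcard, hdegH j] at hle2
        omega
      intro j hij
      refine ⟨fun h => claim2 j hij h, fun hdj => ?_⟩
      have hsplit := degree_split H i
      rw [hdegH i] at hsplit
      have hbelow := below_card i hIH
      rw [hbelow] at hsplit
      by_cases hdp : (i : ℕ) + 1 ≤ d ((i : ℕ) + 1)
      · have hAS : (H.neighborFinset i).filter (i < ·)
            ⊆ univ.filter (fun j : Fin n => i < j ∧ (i : ℕ) + 1 ≤ d ((j : ℕ) + 1)) := by
          intro x hx
          simp only [mem_filter, SimpleGraph.mem_neighborFinset] at hx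
          simp only [mem_filter, mem_univ, true_and]
          exact ⟨hx.2, claim2 x hx.2 hx.1⟩
        have hcardS : (univ.filter (fun j : Fin n => i < j ∧ (i : ℕ) + 1 ≤ d ((j : ℕ) + 1))).card
            = d ((i : ℕ) + 1) + 1 - ((i : ℕ) + 1) := by
          rw [card_above d i, ← hab ((i : ℕ) + 1) (by omega)]
        have hAeq := Finset.eq_of_subset_of_card_le hAS (by rw [hcardS]; omega)
        have hjS : j ∈ univ.filter (fun j : Fin n => i < j ∧ (i : ℕ) + 1 ≤ d ((j : ℕ) + 1)) := by
          simp only [mem_filter, mem_univ, true_and]; exact ⟨hij, hdj⟩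
        rw [← hAeq] at hjS
        simp only [mem_filter, SimpleGraph.mem_neighborFinset] at hjS
        exact hjS.1
      · exfalso
        have hcardS : (univ.filter (fun j : Fin n => i < j ∧ (i : ℕ) + 1 ≤ d ((j : ℕ) + 1))).card
            = d ((i : ℕ) + 1) + 1 - ((i : ℕ) + 1) := by
          rw [card_above d i, ← hab ((i : ℕ) + 1) (by omega)]
        have hjS : j ∈ univ.filter (fun j : Fin n => i < j ∧ (i : ℕ) + 1 ≤ d ((j : ℕ) + 1)) := by
          simp only [mem_filter, mem_univ, true_and]; exact ⟨hij, hdj⟩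
        have hz : (univ.filter (fun j : Fin n => i < j ∧ (i : ℕ) + 1 ≤ d ((j : ℕ) + 1))).card = 0 := by
          rw [hcardS]; omega
        rw [Finset.card_eq_zero] at hz
        rw [hz] at hjS
        exact absurd hjS (Finset.notMem_empty j)
  exact fun i => main ((i : ℕ) + 1) i (by omega)

lemma rule_of_nesting (d : ℕ → ℕ) (G : SimpleGraph (Fin n))
    (hdegG : ∀ i : Fin n, (G.neighborFinset i).card = d ((i : ℕ) + 1))
    (hmono : ∀ i j, 1 ≤ i → i ≤ j → d j ≤ d i)
    (hnest : ∀ u v : Fin n, u ≠ v →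
      (G.neighborFinset v).card ≤ (G.neighborFinset u).card →
      (G.neighborFinset v).erase u ⊆ G.neighborFinset u) :
    ∀ i : Fin n, Rule G d i := by
  have main : ∀ m : ℕ, ∀ i : Fin n, (i : ℕ) < m → Rule G d i := by
    intro m
    induction m with
    | zero => exact fun i h => absurd h (Nat.not_lt_zero _)
    | succ m ih =>
      intro i him
      by_cases hcase : (i : ℕ) < m
      · exact ih i hcase
      have hIH : ∀ k : Fin n, k < i → Rule G d k := fun k hk =>
        ih k (by have := Fin.lt_def.1 hk; omega)
      intro j hij
      constructor
      · intro hadj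
        have hsub : insert i (univ.filter (fun k : Fin n => (k : ℕ) < (i : ℕ)))
            ⊆ G.neighborFinset j := by
          intro k hk
          rcases Finset.mem_insert.1 hk with rfl | hk
          · simpa using hadj.symm
          · simp only [mem_filter, mem_univ, true_and] at hk
            have hki : k < i := Fin.lt_def.2 hk
            have hdk : (G.neighborFinset i).card ≤ (G.neighborFinset k).card := by
              rw [hdegG i, hdegG k]
              exact hmono ((k : ℕ) + 1) ((i : ℕ) + 1) (by omega) (by omega)
            have hjmem : j ∈ (G.neighborFinset i).erase k :=
              Finset.mem_erase.2 ⟨fun h => absurd (h ▸ hij) (lt_asymm (h ▸ hki)), by simpa using hadj⟩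
            have := hnest k i hki.ne hdk hjmem
            simp only [SimpleGraph.mem_neighborFinset] at this ⊢
            exact this.symm
        have hcard : (insert i (univ.filter (fun k : Fin n => (k : ℕ) < (i : ℕ)))).card
            = (i : ℕ) + 1 := by
          rw [Finset.card_insert_of_notMem (by simp), card_val_lt _ _ i.isLt.le]
        have hle2 := Finset.card_le_card hsub
        rw [hcard, hdegG j] at hle2
        exact hle2
      · intro hdj
        by_contra hna
        have hsub : univ.filter (fun k : Fin n => (k : ℕ) < (i : ℕ)) ⊆ G.neighborFinset j := by
          intro k hk
          simp only [mem_filter, mem_univ, true_and] at hk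
          have hki : k < i := Fin.lt_def.2 hk
          have := (hIH k hki j (hki.trans hij)).2 (by omega)
          simpa using this.symm
        have hclt : (univ.filter (fun k : Fin n => (k : ℕ) < (i : ℕ))).card
            < (G.neighborFinset j).card := by
          rw [card_val_lt _ _ i.isLt.le, hdegG j]; omega
        have hnsub : ¬ (G.neighborFinset j ⊆ univ.filter (fun k : Fin n => (k : ℕ) < (i : ℕ))) :=
          fun h => absurd (Finset.card_le_card h) (not_le.2 hclt)
        obtain ⟨m', hm1, hm2⟩ := Finset.not_subset.1 hnsub
        have hm2' : (i : ℕ) ≤ (m' : ℕ) := by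
          simp only [mem_filter, mem_univ, true_and] at hm2; omega
        have hmi : m' ≠ i := by
          rintro rfl
          exact hna ((SimpleGraph.mem_neighborFinset _ _ _).1 hm1).symm
        have him' : i < m' := Fin.lt_def.2 (lt_of_le_of_ne hm2' (fun h => hmi (Fin.ext h.symm)))
        have hdm : (G.neighborFinset m').card ≤ (G.neighborFinset i).card := by
          rw [hdegG i, hdegG m']
          exact hmono ((i : ℕ) + 1) ((m' : ℕ) + 1) (by omega) (by have := Fin.lt_def.1 him'; omega)
        have hjmem : j ∈ (G.neighborFinset m').erase i := by
          refine Finset.mem_erase.2 ⟨hij.ne', ?_⟩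
          simpa using ((SimpleGraph.mem_neighborFinset _ _ _).1 hm1).symm
        have := hnest i m' him'.ne hdm hjmem
        exact hna (by simpa using this)
  exact fun i => main ((i : ℕ) + 1) i (by omega)

lemma ab_of_rule (d : ℕ → ℕ) (G : SimpleGraph (Fin n))
    (hdegG : ∀ i : Fin n, (G.neighborFinset i).card = d ((i : ℕ) + 1))
    (hzero : ∀ j, n < j → d j = 0)
    (hrule : ∀ i : Fin n, Rule G d i) :
    ∀ p : ℕ, 1 ≤ p → d p + 1 - p = ((Finset.Ioc p n).filter (fun q => p ≤ d q)).card := by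
  intro p hp
  by_cases hpn : p ≤ n
  · set i : Fin n := ⟨p - 1, by omega⟩ with hi
    have hpi : (i : ℕ) + 1 = p := by simp only [hi]; omega
    have hsplit := degree_split G i
    rw [hdegG i] at hsplit
    have hIH : ∀ k : Fin n, k < i → Rule G d k := fun k _ => hrule k
    have hbelow := below_card i hIH
    rw [hbelow] at hsplit
    have hAeq : (G.neighborFinset i).filter (i < ·)
        = univ.filter (fun j : Fin n => i < j ∧ (i : ℕ) + 1 ≤ d ((j : ℕ) + 1)) := by
      ext x
      simp only [mem_filter, mem_univ, true_and, SimpleGraph.mem_neighborFinset]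
      constructor
      · rintro ⟨hadj, hx⟩; exact ⟨hx, (hrule i x hx).1 hadj⟩
      · rintro ⟨hx, hdx⟩; exact ⟨(hrule i x hx).2 hdx, hx⟩
    rw [hAeq, card_above d i, hpi] at hsplit
    have hival : (i : ℕ) = p - 1 := by simp only [hi]
    omega
  · have hioc : Finset.Ioc p n = ∅ := Finset.Ioc_eq_empty (by omega)
    rw [hioc]
    simp only [Finset.filter_empty, Finset.card_empty]
    have := hzero p (by omega)
    omega

end Main


/-- A graph `G` with nonincreasing degree sequence `d` (given `1`-indexed, with
`d j = 0` for `j > n`) is the unique labeled realization of `d` iff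
`α(d)ᵢ = β(d)ᵢ` for every `i ≥ 1`, where `α(d)ᵢ = max (dᵢ - i + 1, 0)` (which in `ℕ`
is `d i + 1 - i`) and `β(d)ᵢ = |{j : j > i ∧ d j ≥ i}|` (captured by
`Finset.Ioc i n` since `d j = 0` for `j > n` and `i ≥ 1`). -/
theorem stmt12 (n : ℕ) (G : SimpleGraph (Fin n)) (d : ℕ → ℕ)
    (hdeg : ∀ i : Fin n, deg G i = d ((i : ℕ) + 1))
    (hmono : ∀ i j, 1 ≤ i → i ≤ j → d j ≤ d i)
    (hzero : ∀ j, n < j → d j = 0) :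
    (∀ H : SimpleGraph (Fin n), (∀ i : Fin n, deg H i = d ((i : ℕ) + 1)) → H = G) ↔
      ∀ i : ℕ, 1 ≤ i →
        d i + 1 - i = ((Finset.Ioc i n).filter (fun j => i ≤ d j)).card := by
  have hdeg' : ∀ i : Fin n, (G.neighborFinset i).card = d ((i : ℕ) + 1) := fun i => by
    rw [← deg_eq_degree]; exact hdeg i
  constructor
  · intro huniq
    have hns : ∀ a b c e : Fin n, ¬ SwitchHyp G a b c e := by
      intro a b c e h
      apply switch_ne h
      apply huniq
      intro i
      rw [deg_eq_degree, SimpleGraph.card_neighborFinset_eq_degree, switch_degree h i,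
        ← SimpleGraph.card_neighborFinset_eq_degree]
      exact hdeg' i
    exact ab_of_rule d G hdeg' hzero
      (rule_of_nesting d G hdeg' hmono (fun u v huv hd => nesting hns huv hd))
  · intro hab H hdegH
    have hdegH' : ∀ i : Fin n, (H.neighborFinset i).card = d ((i : ℕ) + 1) := fun i => by
      rw [← deg_eq_degree]; exact hdegH i
    have rH := rule_of_ab d H hdegH' hab
    have rG := rule_of_ab d G hdeg' hab
    ext v w
    rcases lt_trichotomy v w with h | h | h
    · exact (rH v w h).trans (rG v w h).symm
    · subst h
      simp [SimpleGraph.irrefl]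
    · constructor
      · intro hadj
        exact ((rG w v h).2 ((rH w v h).1 hadj.symm)).symm
      · intro hadj
        exact ((rH w v h).2 ((rG w v h).1 hadj.symm)).symm
end

section
/- Let H be a finite simple bipartite graph with partite sets X = {x_1,…,x_p} and Y = {y_1,…,y_q} (every edge joining X to Y), let π = (π_1,…,π_p) with π_i = deg_H(x_i) be listed in nonincreasing order, and let ρ = (ρ_1,…,ρ_q) with ρ_j = deg_H(y_j) be listed in nonincreasing order. Let H* be the graph obtained from H by adding all edges between pairs of distinct vertices of X. Then H* is a threshold graph if and only if ρ = π*, i.e., ρ_i = |{j : π_j ≥ i}| for every i ≥ 1 (with ρ_i = 0 for i > q). -/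
open Finset

def IsThreshold {V : Type*} (G : SimpleGraph V) : Prop :=
  ∃ (t : ℝ) (w : V → ℝ), ∀ u v : V, u ≠ v → (G.Adj u v ↔ t ≤ w u + w v)

lemma deg_eq_card_filter {V : Type*} [Fintype V] (G : SimpleGraph V)
    [DecidableRel G.Adj] (v : V) :
    deg G v = (Finset.univ.filter (fun w => G.Adj v w)).card := by
  rw [deg]
  rw [show G.neighborSet v = ↑(Finset.univ.filter (fun w => G.Adj v w)) by
    ext w; simp [SimpleGraph.neighborSet]]
  rw [Set.ncard_coe_finset]

lemma sum_Icc_one {M : Type*} [AddCommMonoid M] (f : ℕ → M) (n : ℕ) :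
    ∑ a ∈ Finset.Icc 1 n, f a = ∑ i : Fin n, f ((i : ℕ) + 1) := by
  rw [show Finset.Icc 1 n = Finset.Ico 1 (n+1) by rw [Finset.Ico_add_one_right_eq_Icc],
    Finset.sum_Ico_eq_sum_range]
  rw [Fin.sum_univ_eq_sum_range (fun i => f (i + 1))]
  simp [Nat.add_comm]

lemma card_filter_Icc_one (P : ℕ → Prop) [DecidablePred P] (n : ℕ) :
    ((Finset.Icc 1 n).filter P).card
      = ((Finset.univ : Finset (Fin n)).filter (fun i : Fin n => P ((i : ℕ) + 1))).card := by
  rw [Finset.card_filter, Finset.card_filter]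
  exact sum_Icc_one (fun a => if P a then 1 else 0) n

open scoped Classical in
lemma thresholdNesting {V : Type*} [Fintype V] {G : SimpleGraph V} (h : IsThreshold G)
    {u v : V} (hdeg : deg G v ≤ deg G u) {x : V} (hxu : x ≠ u) (hxv : x ≠ v)
    (hadj : G.Adj v x) : G.Adj u x := by
  by_cases huv : u = v
  · subst huv; exact hadj
  obtain ⟨t, w, hw⟩ := h
  rcases le_total (w v) (w u) with hle | hle
  · rw [hw u x (Ne.symm hxu)]
    have := (hw v x (Ne.symm hxv)).mp hadj
    linarith
  · -- w u ≤ w v : neighborhoods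
    set A := (Finset.univ.filter (fun y => G.Adj u y)).erase v with hA
    set B := (Finset.univ.filter (fun y => G.Adj v y)).erase u with hB
    have hAB : A ⊆ B := by
      intro y hy
      simp only [hA, hB, Finset.mem_erase, Finset.mem_filter, Finset.mem_univ, true_and] at hy ⊢
      obtain ⟨hyv, hy⟩ := hy
      have hyu : y ≠ u := fun h => (G.loopless.irrefl u (h ▸ hy)).elim
      refine ⟨hyu, ?_⟩
      rw [hw v y (fun h => hyv h.symm)]
      have := (hw u y (fun h => hyu h.symm)).mp hy
      linarith
    have hcardA : A.card + (if G.Adj u v then 1 else 0) = deg G u := by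
      rw [deg_eq_card_filter]
      by_cases hadjuv : G.Adj u v
      · rw [if_pos hadjuv, hA, Finset.card_erase_add_one]
        simp [hadjuv]
      · rw [if_neg hadjuv, hA, Finset.erase_eq_of_notMem (by simp [hadjuv])]
        simp
    have hcardB : B.card + (if G.Adj u v then 1 else 0) = deg G v := by
      rw [deg_eq_card_filter]
      have hsymm : G.Adj v u ↔ G.Adj u v := ⟨SimpleGraph.Adj.symm, SimpleGraph.Adj.symm⟩
      by_cases hadjuv : G.Adj u v
      · rw [if_pos hadjuv, hB, Finset.card_erase_add_one]
        simp [hsymm.mpr hadjuv]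
      · rw [if_neg hadjuv, hB, Finset.erase_eq_of_notMem (by simp [hsymm, hadjuv])]
        simp
    have hBA : B = A := by
      apply (Finset.eq_of_subset_of_card_le hAB (by omega)).symm
    have hxB : x ∈ B := by
      simp [hB, hxu, hadj]
    rw [hBA] at hxB
    simp only [hA, Finset.mem_erase, Finset.mem_filter] at hxB
    exact hxB.2.2

lemma downClosed_mem_iff {n : ℕ} (S : Finset (Fin n))
    (hdc : ∀ j ∈ S, ∀ j' : Fin n, j' ≤ j → j' ∈ S) (j : Fin n) :
    j ∈ S ↔ (j : ℕ) < S.card := by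
  constructor
  · intro hj
    have hsub : Finset.Iic j ⊆ S := fun j' hj' => hdc j hj j' (Finset.mem_Iic.mp hj')
    have := Finset.card_le_card hsub
    rw [Fin.card_Iic] at this
    omega
  · intro hj
    by_contra hns
    have hsub : S ⊆ Finset.Iio j := by
      intro j' hj'
      rw [Finset.mem_Iio]
      rcases lt_or_ge j' j with h | h
      · exact h
      · exact absurd (hdc j' hj' j h) hns
    have := Finset.card_le_card hsub
    rw [Fin.card_Iio] at this
    omega
open scoped Classical in
/-- For a bipartitioned graph `H` with partite sets `X = Fin p` (the left summands)
and `Y = Fin q` (the right summands) and nonincreasing degree lists `π` on `X` and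
`ρ` on `Y` (given `1`-indexed, zero beyond their lengths), the graph `H*` obtained
by adding all edges inside `X` is a threshold graph iff `ρ = π*`, i.e.
`ρ i = |{j : π j ≥ i}|` for every `i ≥ 1`. -/
theorem stmt13 (p q : ℕ) (H : SimpleGraph (Fin p ⊕ Fin q))
    (hbip : ∀ u w, H.Adj u w →
      ((u.isLeft = true ∧ w.isLeft = false) ∨ (u.isLeft = false ∧ w.isLeft = true)))
    (π ρ : ℕ → ℕ)
    (hπdeg : ∀ i : Fin p, deg H (Sum.inl i) = π ((i : ℕ) + 1))
    (hρdeg : ∀ j : Fin q, deg H (Sum.inr j) = ρ ((j : ℕ) + 1))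
    (hπmono : ∀ i j, 1 ≤ i → i ≤ j → π j ≤ π i)
    (hρmono : ∀ i j, 1 ≤ i → i ≤ j → ρ j ≤ ρ i)
    (hπzero : ∀ j, p < j → π j = 0)
    (hρzero : ∀ j, q < j → ρ j = 0) :
    IsThreshold
        (H ⊔ SimpleGraph.fromRel (fun u w => u.isLeft = true ∧ w.isLeft = true)) ↔
      ∀ i : ℕ, 1 ≤ i → ρ i = ((Finset.Icc 1 p).filter (fun j => i ≤ π j)).card := by
  set G := H ⊔ SimpleGraph.fromRel
      (fun u w : Fin p ⊕ Fin q => u.isLeft = true ∧ w.isLeft = true) with hG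
  have hGlr : ∀ (i : Fin p) (j : Fin q),
      G.Adj (Sum.inl i) (Sum.inr j) ↔ H.Adj (Sum.inl i) (Sum.inr j) := by
    intro i j
    simp [hG, SimpleGraph.fromRel_adj]
  have hGll : ∀ (i i' : Fin p), i ≠ i' → G.Adj (Sum.inl i) (Sum.inl i') := by
    intro i i' h
    refine Or.inr ⟨by simp [h], Or.inl ⟨rfl, rfl⟩⟩
  have hGrr : ∀ (j j' : Fin q), ¬ G.Adj (Sum.inr j) (Sum.inr j') := by
    intro j j' h
    rcases h with h | h
    · rcases hbip _ _ h with ⟨h1, _⟩ | ⟨_, h1⟩ <;> simp at h1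
    · rcases h with ⟨_, ⟨h1, _⟩ | ⟨h1, _⟩⟩ <;> simp at h1
  have hdegL : ∀ i : Fin p,
      (Finset.univ.filter (fun j : Fin q => H.Adj (Sum.inl i) (Sum.inr j))).card
        = π ((i : ℕ) + 1) := by
    intro i
    rw [← hπdeg i, deg_eq_card_filter]
    have : (Finset.univ.filter (fun w => H.Adj (Sum.inl i) w))
        = (Finset.univ.filter (fun j : Fin q => H.Adj (Sum.inl i) (Sum.inr j))).map
            ⟨Sum.inr, Sum.inr_injective⟩ := by
      ext w
      cases w with
      | inl a =>
        simp only [Finset.mem_filter, Finset.mem_univ, true_and, Finset.mem_map,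
          Function.Embedding.coeFn_mk]
        constructor
        · intro h; rcases hbip _ _ h with ⟨_, h1⟩ | ⟨h1, _⟩ <;> simp at h1
        · rintro ⟨b, _, hb⟩; exact absurd hb (by simp)
      | inr b =>
        simp
    rw [this, Finset.card_map]
  have hdegR : ∀ j : Fin q,
      (Finset.univ.filter (fun i : Fin p => H.Adj (Sum.inl i) (Sum.inr j))).card
        = ρ ((j : ℕ) + 1) := by
    intro j
    rw [← hρdeg j, deg_eq_card_filter]
    have : (Finset.univ.filter (fun w => H.Adj (Sum.inr j) w))
        = (Finset.univ.filter (fun i : Fin p => H.Adj (Sum.inl i) (Sum.inr j))).map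
            ⟨Sum.inl, Sum.inl_injective⟩ := by
      ext w
      cases w with
      | inl a =>
        simp only [Finset.mem_filter, Finset.mem_univ, true_and, Finset.mem_map,
          Function.Embedding.coeFn_mk]
        rw [H.adj_comm]
        constructor
        · intro h; exact ⟨a, h, rfl⟩
        · rintro ⟨b, hb, hba⟩
          obtain rfl : b = a := Sum.inl_injective hba
          exact hb
      | inr b =>
        simp only [Finset.mem_filter, Finset.mem_univ, true_and, Finset.mem_map,
          Function.Embedding.coeFn_mk]
        constructor
        · intro h; rcases hbip _ _ h with ⟨h1, _⟩ | ⟨_, h1⟩ <;> simp at h1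
        · rintro ⟨b', _, hb⟩; exact absurd hb (by simp)
    rw [this, Finset.card_map]
  have hdegGR : ∀ j : Fin q, deg G (Sum.inr j) = ρ ((j : ℕ) + 1) := by
    intro j
    rw [deg_eq_card_filter, ← hdegR j]
    have : (Finset.univ.filter (fun w => G.Adj (Sum.inr j) w))
        = (Finset.univ.filter (fun i : Fin p => H.Adj (Sum.inl i) (Sum.inr j))).map
            ⟨Sum.inl, Sum.inl_injective⟩ := by
      ext w
      cases w with
      | inl a =>
        simp only [Finset.mem_filter, Finset.mem_univ, true_and, Finset.mem_map,
          Function.Embedding.coeFn_mk]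
        rw [G.adj_comm, hGlr a j]
        constructor
        · intro h; exact ⟨a, h, rfl⟩
        · rintro ⟨b, hb, hba⟩
          obtain rfl : b = a := Sum.inl_injective hba
          exact hb
      | inr b =>
        simp only [Finset.mem_filter, Finset.mem_univ, true_and, Finset.mem_map,
          Function.Embedding.coeFn_mk]
        constructor
        · intro h; exact absurd h (hGrr j b)
        · rintro ⟨b', -, hb⟩; exact absurd hb (by simp)
    rw [this, Finset.card_map]
  have hπle_q : ∀ i : Fin p, π ((i : ℕ) + 1) ≤ q := by
    intro i
    rw [← hdegL i]
    calc (Finset.univ.filter (fun j : Fin q => H.Adj (Sum.inl i) (Sum.inr j))).card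
        ≤ (Finset.univ : Finset (Fin q)).card := Finset.card_filter_le _ _
      _ = q := by simp
  constructor
  · -- forward
    intro hth i hi
    have ychar : ∀ (k : Fin p) (j : Fin q),
        H.Adj (Sum.inl k) (Sum.inr j) ↔ (j : ℕ) < π ((k : ℕ) + 1) := by
      intro k j
      have hdc : ∀ j₁ ∈ Finset.univ.filter (fun j' : Fin q => H.Adj (Sum.inl k) (Sum.inr j')),
          ∀ j₂ : Fin q, j₂ ≤ j₁ →
            j₂ ∈ Finset.univ.filter (fun j' : Fin q => H.Adj (Sum.inl k) (Sum.inr j')) := by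
        intro j₁ hj₁ j₂ hle
        rw [Finset.mem_filter] at hj₁ ⊢
        refine ⟨Finset.mem_univ _, ?_⟩
        by_cases hjj : j₂ = j₁
        · subst hjj; exact hj₁.2
        · have hdegle : deg G (Sum.inr j₁) ≤ deg G (Sum.inr j₂) := by
            rw [hdegGR, hdegGR]
            exact hρmono _ _ (by omega) (by
              have := Fin.le_def.mp hle
              omega)
          have hadj : G.Adj (Sum.inr j₁) (Sum.inl k) := ((hGlr k j₁).mpr hj₁.2).symm
          have := thresholdNesting hth hdegle (x := Sum.inl k) (by simp) (by simp) hadj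
          exact (hGlr k j₂).mp this.symm
      have hmem := downClosed_mem_iff _ hdc j
      rw [Finset.mem_filter, hdegL k] at hmem
      constructor
      · intro h; exact hmem.mp ⟨Finset.mem_univ _, h⟩
      · intro h; exact (hmem.mpr h).2
    rcases le_or_gt i q with hle | hlt
    · have hq1 : i - 1 < q := by omega
      set j0 : Fin q := ⟨i - 1, hq1⟩ with hj0
      have h1 : ρ i = (Finset.univ.filter
          (fun k : Fin p => H.Adj (Sum.inl k) (Sum.inr j0))).card := by
        rw [hdegR j0]
        congr 1
        simp [hj0]
        omega
      rw [h1, card_filter_Icc_one (fun j => i ≤ π j) p]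
      congr 1
      apply Finset.filter_congr
      intro k _
      rw [ychar k j0]
      have : (j0 : ℕ) = i - 1 := rfl
      constructor
      · intro h; simp only [this] at h; omega
      · intro h; simp only [this]; omega
    · rw [hρzero i hlt]
      symm
      rw [Finset.card_eq_zero, Finset.filter_eq_empty_iff]
      intro j hj
      rw [Finset.mem_Icc] at hj
      have hjq : π j ≤ q := by
        have := hπle_q ⟨j - 1, by omega⟩
        have hh : (⟨j - 1, by omega⟩ : Fin p).val + 1 = j := by simp; omega
        rwa [hh] at this
      omega
  · -- backward
    intro hconj
    have hcardlt : ∀ k, k ≤ q →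
        (Finset.univ.filter (fun j : Fin q => (j : ℕ) < k)).card = k := by
      intro k hk
      rw [Finset.card_filter]
      rw [Fin.sum_univ_eq_sum_range (fun m => if m < k then 1 else 0)]
      rw [← Finset.card_filter]
      have : (Finset.range q).filter (fun m => m < k) = Finset.range k := by
        ext m; simp; omega
      rw [this, Finset.card_range]
    have key : ∀ k, k ≤ q → ∀ i : Fin p,
        (Finset.univ.filter
          (fun j : Fin q => (j : ℕ) < k ∧ H.Adj (Sum.inl i) (Sum.inr j))).card
          = min (π ((i : ℕ) + 1)) k := by
      intro k hk
      have hbound : ∀ i : Fin p,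
          (Finset.univ.filter
            (fun j : Fin q => (j : ℕ) < k ∧ H.Adj (Sum.inl i) (Sum.inr j))).card
            ≤ min (π ((i : ℕ) + 1)) k := by
        intro i
        apply le_min
        · rw [← hdegL i]
          apply Finset.card_le_card
          intro j hj
          simp only [Finset.mem_filter] at hj ⊢
          exact ⟨hj.1, hj.2.2⟩
        · calc (Finset.univ.filter
              (fun j : Fin q => (j : ℕ) < k ∧ H.Adj (Sum.inl i) (Sum.inr j))).card
              ≤ (Finset.univ.filter (fun j : Fin q => (j : ℕ) < k)).card := by
                apply Finset.card_le_card
                intro j hj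
                simp only [Finset.mem_filter] at hj ⊢
                exact ⟨hj.1, hj.2.1⟩
            _ = k := hcardlt k hk
      have hsum : (∑ i : Fin p, (Finset.univ.filter
            (fun j : Fin q => (j : ℕ) < k ∧ H.Adj (Sum.inl i) (Sum.inr j))).card)
          = ∑ i : Fin p, min (π ((i : ℕ) + 1)) k := by
        calc (∑ i : Fin p, (Finset.univ.filter
              (fun j : Fin q => (j : ℕ) < k ∧ H.Adj (Sum.inl i) (Sum.inr j))).card)
            = ∑ i : Fin p, ∑ j : Fin q,
                if (j : ℕ) < k ∧ H.Adj (Sum.inl i) (Sum.inr j) then 1 else 0 := by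
              apply Finset.sum_congr rfl
              intro i _
              rw [Finset.card_filter]
          _ = ∑ j : Fin q, ∑ i : Fin p,
                if (j : ℕ) < k ∧ H.Adj (Sum.inl i) (Sum.inr j) then 1 else 0 :=
              Finset.sum_comm
          _ = ∑ j : Fin q, (if (j : ℕ) < k then ρ ((j : ℕ) + 1) else 0) := by
              apply Finset.sum_congr rfl
              intro j _
              by_cases hjk : (j : ℕ) < k
              · simp only [hjk, true_and, if_true]
                rw [← hdegR j, Finset.card_filter]
              · simp [hjk]
          _ = ∑ m ∈ Finset.range k, ρ (m + 1) := by
              rw [Fin.sum_univ_eq_sum_range (fun m => if m < k then ρ (m + 1) else 0)]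
              rw [← Finset.sum_filter]
              have : (Finset.range q).filter (fun m => m < k) = Finset.range k := by
                ext m; simp; omega
              rw [this]
          _ = ∑ m ∈ Finset.range k, ∑ i : Fin p,
                (if m + 1 ≤ π ((i : ℕ) + 1) then 1 else 0) := by
              apply Finset.sum_congr rfl
              intro m _
              rw [hconj (m + 1) (by omega), card_filter_Icc_one, Finset.card_filter]
          _ = ∑ i : Fin p, ∑ m ∈ Finset.range k,
                (if m + 1 ≤ π ((i : ℕ) + 1) then 1 else 0) := Finset.sum_comm
          _ = ∑ i : Fin p, min (π ((i : ℕ) + 1)) k := by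
              apply Finset.sum_congr rfl
              intro i _
              rw [← Finset.card_filter]
              have : (Finset.range k).filter (fun m => m + 1 ≤ π ((i : ℕ) + 1))
                  = Finset.range (min (π ((i : ℕ) + 1)) k) := by
                ext m; simp; omega
              rw [this, Finset.card_range]
      intro i
      exact (Finset.sum_eq_sum_iff_of_le (fun i _ => hbound i)).mp hsum i (Finset.mem_univ i)
    have hferrers : ∀ (i : Fin p) (j : Fin q),
        H.Adj (Sum.inl i) (Sum.inr j) ↔ (j : ℕ) < π ((i : ℕ) + 1) := by
      intro i j
      constructor
      · intro hadj
        by_contra hlt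
        push_neg at hlt
        have h1 := key (j : ℕ) (by omega) i
        have h2 := key ((j : ℕ) + 1) (by omega) i
        have hins : insert j (Finset.univ.filter
              (fun j' : Fin q => (j' : ℕ) < (j : ℕ) ∧ H.Adj (Sum.inl i) (Sum.inr j')))
            ⊆ Finset.univ.filter
              (fun j' : Fin q => (j' : ℕ) < (j : ℕ) + 1 ∧ H.Adj (Sum.inl i) (Sum.inr j')) := by
          intro x hx
          rw [Finset.mem_insert] at hx
          rcases hx with rfl | hx
          · simp only [Finset.mem_filter, Finset.mem_univ, true_and]
            exact ⟨by omega, hadj⟩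
          · rw [Finset.mem_filter] at hx ⊢
            exact ⟨hx.1, by omega, hx.2.2⟩
        have hcard := Finset.card_le_card hins
        rw [Finset.card_insert_of_notMem (by simp)] at hcard
        omega
      · intro hj
        have h2 := key ((j : ℕ) + 1) (by omega) i
        have hmin : min (π ((i : ℕ) + 1)) ((j : ℕ) + 1) = (j : ℕ) + 1 := by omega
        have heq : Finset.univ.filter
              (fun j' : Fin q => (j' : ℕ) < (j : ℕ) + 1 ∧ H.Adj (Sum.inl i) (Sum.inr j'))
            = Finset.univ.filter (fun j' : Fin q => (j' : ℕ) < (j : ℕ) + 1) := by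
          apply Finset.eq_of_subset_of_card_le
          · intro x hx
            rw [Finset.mem_filter] at hx ⊢
            exact ⟨hx.1, hx.2.1⟩
          · rw [hcardlt ((j : ℕ) + 1) (by omega), h2, hmin]
        have hjmem : j ∈ Finset.univ.filter (fun j' : Fin q => (j' : ℕ) < (j : ℕ) + 1) := by
          simp
        rw [← heq, Finset.mem_filter] at hjmem
        exact hjmem.2.2
    refine ⟨0, Sum.elim (fun i : Fin p => (π ((i : ℕ) + 1) : ℝ))
      (fun j : Fin q => -(((j : ℕ) : ℝ) + 1)), ?_⟩
    intro u v huv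
    cases u with
    | inl a =>
      cases v with
      | inl b =>
        have hab : a ≠ b := fun h => huv (by rw [h])
        simp only [Sum.elim_inl]
        constructor
        · intro _; positivity
        · intro _; exact hGll a b hab
      | inr b =>
        simp only [Sum.elim_inl, Sum.elim_inr]
        rw [hGlr a b, hferrers a b]
        constructor
        · intro h
          have h' : ((b : ℕ) : ℝ) + 1 ≤ (π ((a : ℕ) + 1) : ℝ) := by
            exact_mod_cast Nat.succ_le_of_lt h
          linarith
        · intro h
          have h' : ((b : ℕ) + 1 : ℕ) ≤ π ((a : ℕ) + 1) := by
            exact_mod_cast (by push_cast; linarith :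
              (((b : ℕ) + 1 : ℕ) : ℝ) ≤ (π ((a : ℕ) + 1) : ℝ))
          omega
    | inr a =>
      cases v with
      | inl b =>
        simp only [Sum.elim_inl, Sum.elim_inr]
        rw [G.adj_comm, hGlr b a, hferrers b a]
        constructor
        · intro h
          have h' : ((a : ℕ) : ℝ) + 1 ≤ (π ((b : ℕ) + 1) : ℝ) := by
            exact_mod_cast Nat.succ_le_of_lt h
          linarith
        · intro h
          have h' : ((a : ℕ) + 1 : ℕ) ≤ π ((b : ℕ) + 1) := by
            exact_mod_cast (by push_cast; linarith :
              (((a : ℕ) + 1 : ℕ) : ℝ) ≤ (π ((b : ℕ) + 1) : ℝ))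
          omega
      | inr b =>
        simp only [Sum.elim_inr]
        constructor
        · intro h; exact absurd h (hGrr a b)
        · intro h
          exfalso
          have ha : (0 : ℝ) ≤ ((a : ℕ) : ℝ) := Nat.cast_nonneg _
          have hb : (0 : ℝ) ≤ ((b : ℕ) : ℝ) := Nat.cast_nonneg _
          linarith
end

section
/- Let H be a finite simple bipartite graph with fixed partite sets X and Y (every edge joining X to Y). Then H is a difference graph (there exist a real number t and a weight function w on the vertices with |w(v)| ≤ t for every vertex v, such that two distinct vertices are adjacent if and only if the absolute value of the difference of their weights is at least t) if and only if H is the only bipartite graph with partite sets X and Y in which every vertex has its given degree (every bipartite graph H' on the same vertex set, with all edges joining X to Y and with deg_{H'}(v) = deg_H(v) for every vertex v, satisfies H' = H). -/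
/-- A graph is a difference graph if there are a real threshold `t` and real vertex
weights, each of absolute value at most `t`, such that two distinct vertices are
adjacent iff the absolute value of the difference of their weights is at least `t`. -/
def IsDifference {V : Type*} (H : SimpleGraph V) : Prop :=
  ∃ (t : ℝ) (w : V → ℝ), (∀ v, |w v| ≤ t) ∧
    ∀ u v : V, u ≠ v → (H.Adj u v ↔ t ≤ |w u - w v|)

/-- The crossing property: for vertices `u, u'` in `X` and `v, v'` in `Y`,
if `u v'` and `u' v` are edges then `u v` or `u' v'` is an edge. -/
def Cross {V : Type*} (X Y : Set V) (H : SimpleGraph V) : Prop :=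
  ∀ u u' v v', u ∈ X → u' ∈ X → v ∈ Y → v' ∈ Y →
    H.Adj u v' → H.Adj u' v → H.Adj u v ∨ H.Adj u' v'

section aux

variable {V : Type*} [Fintype V] {X Y : Set V} {H : SimpleGraph V}

lemma no_inner_X (hdisj : Disjoint X Y)
    (hbip : ∀ u w, H.Adj u w → (u ∈ X ∧ w ∈ Y) ∨ (u ∈ Y ∧ w ∈ X))
    {a b : V} (ha : a ∈ X) (hb : b ∈ X) : ¬ H.Adj a b := by
  intro h
  rcases hbip a b h with ⟨_, h2⟩ | ⟨h1, _⟩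
  · exact (Set.disjoint_left.mp hdisj hb) h2
  · exact (Set.disjoint_left.mp hdisj ha) h1

lemma no_inner_Y (hdisj : Disjoint X Y)
    (hbip : ∀ u w, H.Adj u w → (u ∈ X ∧ w ∈ Y) ∨ (u ∈ Y ∧ w ∈ X))
    {a b : V} (ha : a ∈ Y) (hb : b ∈ Y) : ¬ H.Adj a b := by
  intro h
  rcases hbip a b h with ⟨h1, _⟩ | ⟨_, h2⟩
  · exact (Set.disjoint_left.mp hdisj h1) ha
  · exact (Set.disjoint_left.mp hdisj h2) hb

lemma diff_to_cross (hdisj : Disjoint X Y)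
    (hbip : ∀ u w, H.Adj u w → (u ∈ X ∧ w ∈ Y) ∨ (u ∈ Y ∧ w ∈ X))
    (hd : IsDifference H) : Cross X Y H := by
  obtain ⟨t, w, hw, hadj⟩ := hd
  intro u u' v v' hu hu' hv hv' h1 h2
  by_cases huu : u = u'
  · subst huu; exact Or.inl h2
  by_cases hvv : v = v'
  · subst hvv; exact Or.inl h1
  have hne : ∀ a b : V, a ∈ X → b ∈ Y → a ≠ b := by
    intro a b ha hb h; exact (Set.disjoint_left.mp hdisj ha) (h ▸ hb)
  have h1' : t ≤ |w u - w v'| := (hadj u v' (hne u v' hu hv')).mp h1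
  have h2' : t ≤ |w u' - w v| := (hadj u' v (hne u' v hu' hv)).mp h2
  have hXa : ¬ H.Adj u u' := no_inner_X hdisj hbip hu hu'
  have hYa : ¬ H.Adj v v' := no_inner_Y hdisj hbip hv hv'
  have hX' : |w u - w u'| < t := lt_of_not_ge (fun hc => hXa ((hadj u u' huu).mpr hc))
  have hY' : |w v - w v'| < t := lt_of_not_ge (fun hc => hYa ((hadj v v' hvv).mpr hc))
  have hX1 : w u - w u' < t := lt_of_le_of_lt (le_abs_self _) hX'
  have hX2 : w u' - w u < t := lt_of_le_of_lt (le_abs_self _) (by rwa [abs_sub_comm] at hX')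
  have hY1 : w v - w v' < t := lt_of_le_of_lt (le_abs_self _) hY'
  have hY2 : w v' - w v < t := lt_of_le_of_lt (le_abs_self _) (by rwa [abs_sub_comm] at hY')
  have goal : t ≤ |w u - w v| ∨ t ≤ |w u' - w v'| := by
    rcases le_abs.mp h1' with ha | ha <;> rcases le_abs.mp h2' with hb | hb <;>
      rcases le_total (w u) (w u') with hc | hc <;> rcases le_total (w v) (w v') with he | he <;>
      first
        | exact Or.inl (le_abs.mpr (Or.inl (by linarith)))
        | exact Or.inl (le_abs.mpr (Or.inr (by linarith)))
        | exact Or.inr (le_abs.mpr (Or.inl (by linarith)))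
        | exact Or.inr (le_abs.mpr (Or.inr (by linarith)))
  rcases goal with hg | hg
  · exact Or.inl ((hadj u v (hne u v hu hv)).mpr hg)
  · exact Or.inr ((hadj u' v' (hne u' v' hu' hv')).mpr hg)

/-- swap-sum lemma -/
lemma swap_sum [DecidableEq V] {A B : Finset V} (f : V → ℕ) (hcard : A.card = B.card)
    (hAB : A ≠ B)
    (h : ∀ a ∈ A \ B, ∀ b ∈ B \ A, f b < f a) : ∑ b ∈ B, f b < ∑ a ∈ A, f a := by
  have hABne : (A \ B).Nonempty := by
    rw [Finset.sdiff_nonempty]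
    intro hsub
    exact hAB (Finset.eq_of_subset_of_card_le hsub hcard.ge)
  have hcard' : (A \ B).card = (B \ A).card := by
    have h1 := Finset.card_inter_add_card_sdiff A B
    have h2 := Finset.card_inter_add_card_sdiff B A
    rw [Finset.inter_comm] at h2
    omega
  have hBAne : (B \ A).Nonempty := by
    rw [← Finset.card_pos, ← hcard', Finset.card_pos]; exact hABne
  obtain ⟨a0, ha0, hmin⟩ := (A \ B).exists_min_image f hABne
  obtain ⟨b0, hb0⟩ := hBAne
  have hm1 : 1 ≤ f a0 := Nat.one_le_iff_ne_zero.mpr (fun hz => by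
    have := h a0 ha0 b0 hb0; omega)
  have hup : ∑ b ∈ B \ A, f b ≤ (B \ A).card * (f a0 - 1) := by
    have := Finset.sum_le_card_nsmul (B \ A) f (f a0 - 1) (fun b hb => by
      have := h a0 ha0 b hb; omega)
    simpa [smul_eq_mul] using this
  have hlo : (A \ B).card * f a0 ≤ ∑ a ∈ A \ B, f a := by
    have := Finset.card_nsmul_le_sum (A \ B) f (f a0) hmin
    simpa [smul_eq_mul] using this
  have hkpos : 1 ≤ (A \ B).card := Finset.card_pos.mpr hABne
  have hstrict : ∑ b ∈ B \ A, f b < ∑ a ∈ A \ B, f a := by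
    have : (B \ A).card * (f a0 - 1) < (A \ B).card * f a0 := by
      rw [← hcard']
      have h1 : f a0 - 1 < f a0 := by omega
      exact Nat.mul_lt_mul_of_le_of_lt (le_refl _) h1 (by omega)
    omega
  have e1 := Finset.sum_inter_add_sum_sdiff A B f
  have e2 := Finset.sum_inter_add_sum_sdiff B A f
  rw [Finset.inter_comm] at e2
  omega

lemma cross_to_unique (hdisj : Disjoint X Y) (hunion : X ∪ Y = Set.univ)
    (hbip : ∀ u w, H.Adj u w → (u ∈ X ∧ w ∈ Y) ∨ (u ∈ Y ∧ w ∈ X))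
    (hP : Cross X Y H) :
    ∀ H' : SimpleGraph V,
      (∀ u w, H'.Adj u w → (u ∈ X ∧ w ∈ Y) ∨ (u ∈ Y ∧ w ∈ X)) →
      (∀ v, deg H' v = deg H v) → H' = H := by
  classical
  intro H' hbip' hdeg
  set d : V → ℕ := deg H with hd
  -- neighborhoods of vertices of Y are nested
  have ynest : ∀ v ∈ Y, ∀ v' ∈ Y,
      H.neighborSet v ⊆ H.neighborSet v' ∨ H.neighborSet v' ⊆ H.neighborSet v := by
    intro v hv v' hv'
    by_contra hc
    push_neg at hc
    obtain ⟨u1, hu1, hu1'⟩ := Set.not_subset.mp hc.1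
    obtain ⟨u2, hu2, hu2'⟩ := Set.not_subset.mp hc.2
    have hu1X : u1 ∈ X := by
      rcases hbip v u1 hu1 with ⟨h1, _⟩ | ⟨_, h2⟩
      · exact absurd h1 (fun h => (Set.disjoint_left.mp hdisj h) hv)
      · exact h2
    have hu2X : u2 ∈ X := by
      rcases hbip v' u2 hu2 with ⟨h1, _⟩ | ⟨_, h2⟩
      · exact absurd h1 (fun h => (Set.disjoint_left.mp hdisj h) hv')
      · exact h2
    rcases hP u2 u1 v v' hu2X hu1X hv hv' hu2.symm hu1.symm with h | h
    · exact hu2' h.symm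
    · exact hu1' h.symm
  have monoY : ∀ v ∈ Y, ∀ v' ∈ Y, d v ≤ d v' → H.neighborSet v ⊆ H.neighborSet v' := by
    intro v hv v' hv' hle
    rcases ynest v hv v' hv' with h | h
    · exact h
    · have := Set.eq_of_subset_of_ncard_le h hle (Set.toFinite _)
      rw [this]
  have hupset : ∀ u ∈ X, ∀ a b : V, b ∈ Y → H.Adj u a → ¬ H.Adj u b → d b < d a := by
    intro u hu a b hb hadj hnadj
    have haY : a ∈ Y := by
      rcases hbip u a hadj with ⟨_, h2⟩ | ⟨h1, _⟩
      · exact h2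
      · exact absurd h1 (Set.disjoint_left.mp hdisj hu)
    by_contra hc
    push_neg at hc
    exact hnadj ((monoY a haY b hb hc) hadj.symm).symm
  set Xf : Finset V := Finset.univ.filter (· ∈ X) with hXf
  set Yf : Finset V := Finset.univ.filter (· ∈ Y) with hYf
  have NFdef : ∀ (G : SimpleGraph V) (v : V),
      G.neighborSet v = ↑(Finset.univ.filter (G.Adj v ·)) := by
    intro G v; ext x; simp [SimpleGraph.mem_neighborSet]
  have degF : ∀ (G : SimpleGraph V) (v : V),
      deg G v = (Finset.univ.filter (G.Adj v ·)).card := by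
    intro G v
    rw [deg, NFdef G v, Set.ncard_coe_finset]
  -- double counting identity
  have key : ∀ G : SimpleGraph V, (∀ u w, G.Adj u w → (u ∈ X ∧ w ∈ Y) ∨ (u ∈ Y ∧ w ∈ X)) →
      ∑ u ∈ Xf, ∑ v ∈ Finset.univ.filter (G.Adj u ·), d v = ∑ v ∈ Yf, (deg G v) * d v := by
    intro G hbG
    have step1 : ∀ u ∈ Xf, ∑ v ∈ Finset.univ.filter (G.Adj u ·), d v
        = ∑ v ∈ Yf, if G.Adj u v then d v else 0 := by
      intro u hu
      have huX : u ∈ X := by simpa [hXf] using hu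
      have huY : u ∉ Y := Set.disjoint_left.mp hdisj huX
      have : Finset.univ.filter (G.Adj u ·) = Yf.filter (G.Adj u ·) := by
        ext v
        simp only [Finset.mem_filter, Finset.mem_univ, true_and, hYf]
        constructor
        · intro h
          refine ⟨?_, h⟩
          rcases hbG u v h with ⟨_, h2⟩ | ⟨h1, _⟩
          · exact h2
          · exact absurd h1 huY
        · exact fun h => h.2
      rw [this, Finset.sum_filter]
    rw [Finset.sum_congr rfl step1, Finset.sum_comm]
    refine Finset.sum_congr rfl ?_
    intro v hv
    have hvY : v ∈ Y := by simpa [hYf] using hv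
    have hvX : v ∉ X := fun h => (Set.disjoint_left.mp hdisj h) hvY
    have : Xf.filter (fun u => G.Adj u v) = Finset.univ.filter (G.Adj v ·) := by
      ext u
      simp only [Finset.mem_filter, Finset.mem_univ, true_and, hXf]
      constructor
      · exact fun h => h.2.symm
      · intro h
        refine ⟨?_, h.symm⟩
        rcases hbG v u h with ⟨h1, _⟩ | ⟨_, h2⟩
        · exact absurd h1 hvX
        · exact h2
    rw [← Finset.sum_filter, this, Finset.sum_const, smul_eq_mul, ← degF]
  have hsum_eq : ∑ u ∈ Xf, ∑ v ∈ Finset.univ.filter (H'.Adj u ·), d v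
      = ∑ u ∈ Xf, ∑ v ∈ Finset.univ.filter (H.Adj u ·), d v := by
    rw [key H' hbip', key H hbip]
    exact Finset.sum_congr rfl (fun v _ => by rw [hdeg v])
  -- termwise inequality
  have hle : ∀ u ∈ Xf, NeZero 0 → True := fun _ _ _ => trivial
  have hterm : ∀ u ∈ Xf, Finset.univ.filter (H'.Adj u ·) ≠ Finset.univ.filter (H.Adj u ·) →
      ∑ v ∈ Finset.univ.filter (H'.Adj u ·), d v < ∑ v ∈ Finset.univ.filter (H.Adj u ·), d v := by
    intro u hu hne
    have huX : u ∈ X := by simpa [hXf] using hu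
    refine swap_sum d ?_ (Ne.symm hne) ?_
    · rw [← degF, ← degF, hdeg]
    · intro a ha b hb
      simp only [Finset.mem_sdiff, Finset.mem_filter, Finset.mem_univ, true_and] at ha hb
      have hbY : b ∈ Y := by
        rcases hbip' u b hb.1 with ⟨_, h2⟩ | ⟨h1, _⟩
        · exact h2
        · exact absurd h1 (Set.disjoint_left.mp hdisj huX)
      exact hupset u huX a b hbY ha.1 hb.2
  have hNeq : ∀ u ∈ X, Finset.univ.filter (H'.Adj u ·) = Finset.univ.filter (H.Adj u ·) := by
    by_contra hc
    push_neg at hc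
    obtain ⟨u0, hu0X, hne0⟩ := hc
    have hu0 : u0 ∈ Xf := by simp [hXf, hu0X]
    have : ∑ u ∈ Xf, ∑ v ∈ Finset.univ.filter (H'.Adj u ·), d v
        < ∑ u ∈ Xf, ∑ v ∈ Finset.univ.filter (H.Adj u ·), d v := by
      refine Finset.sum_lt_sum ?_ ⟨u0, hu0, hterm u0 hu0 hne0⟩
      intro u hu
      by_cases h : Finset.univ.filter (H'.Adj u ·) = Finset.univ.filter (H.Adj u ·)
      · rw [h]
      · exact le_of_lt (hterm u hu h)
    omega
  have hAdjX : ∀ u ∈ X, ∀ b, H'.Adj u b ↔ H.Adj u b := by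
    intro u hu b
    have := hNeq u hu
    rw [Finset.ext_iff] at this
    simpa using this b
  ext a b
  have ha : a ∈ X ∪ Y := hunion ▸ Set.mem_univ a
  have hb : b ∈ X ∪ Y := hunion ▸ Set.mem_univ b
  rcases ha with ha | ha
  · exact hAdjX a ha b
  · rcases hb with hb | hb
    · exact ⟨fun h => ((hAdjX b hb a).mp h.symm).symm, fun h => ((hAdjX b hb a).mpr h.symm).symm⟩
    · exact iff_of_false (no_inner_Y hdisj hbip' ha hb) (no_inner_Y hdisj hbip ha hb)

/-- cardinality of a one-element swap -/
lemma ncard_swap {s : Set V} {x y : V} (hx : x ∈ s) (hy : y ∉ s) :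
    (insert y (s \ {x})).ncard = s.ncard := by
  have h1 : y ∉ s \ {x} := fun h => hy h.1
  rw [Set.ncard_insert_of_notMem h1 (Set.toFinite _),
    Set.ncard_diff_singleton_of_mem hx]
  have : 0 < s.ncard := (Set.ncard_pos (Set.toFinite _)).mpr ⟨x, hx⟩
  omega

/-- the rem predicate for the swap -/
def remP (u u' v v' a b : V) : Prop :=
  (a = u ∧ b = v') ∨ (a = v' ∧ b = u) ∨ (a = u' ∧ b = v) ∨ (a = v ∧ b = u')

/-- the add predicate for the swap -/
def addP (u u' v v' a b : V) : Prop :=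
  (a = u ∧ b = v) ∨ (a = v ∧ b = u) ∨ (a = u' ∧ b = v') ∨ (a = v' ∧ b = u')

/-- the swapped graph: remove edges `u v'`, `u' v`; add edges `u v`, `u' v'` -/
def swapGraph (H : SimpleGraph V) (u u' v v' : V) : SimpleGraph V where
  Adj a b := (H.Adj a b ∧ ¬ remP u u' v v' a b) ∨ (addP u u' v v' a b ∧ a ≠ b)
  symm := ⟨fun a b h => by
    rcases h with ⟨h, hr⟩ | ⟨ha, hab⟩
    · exact Or.inl ⟨h.symm, by unfold remP at hr ⊢; tauto⟩
    · exact Or.inr ⟨by unfold addP at ha ⊢; tauto, hab.symm⟩⟩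
  loopless := ⟨fun a h => by
    rcases h with ⟨h, _⟩ | ⟨_, hab⟩
    · exact H.loopless.irrefl a h
    · exact hab rfl⟩

lemma swapGraph_adj (H : SimpleGraph V) (u u' v v' a b : V) :
    (swapGraph H u u' v v').Adj a b ↔
      (H.Adj a b ∧ ¬ remP u u' v v' a b) ∨ (addP u u' v v' a b ∧ a ≠ b) := Iff.rfl

set_option maxHeartbeats 1000000 in
lemma unique_to_cross (hdisj : Disjoint X Y)
    (hbip : ∀ u w, H.Adj u w → (u ∈ X ∧ w ∈ Y) ∨ (u ∈ Y ∧ w ∈ X))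
    (huniq : ∀ H' : SimpleGraph V,
      (∀ u w, H'.Adj u w → (u ∈ X ∧ w ∈ Y) ∨ (u ∈ Y ∧ w ∈ X)) →
      (∀ v, deg H' v = deg H v) → H' = H) : Cross X Y H := by
  intro u u' v v' hu hu' hv hv' h1 h2
  by_contra hc
  push_neg at hc
  obtain ⟨hnuv, hnu'v'⟩ := hc
  -- distinctness
  have hne : ∀ a b : V, a ∈ X → b ∈ Y → a ≠ b := by
    intro a b ha hb h; exact (Set.disjoint_left.mp hdisj ha) (h ▸ hb)
  have huu' : u ≠ u' := fun h => hnu'v' (h ▸ h1)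
  have hvv' : v ≠ v' := fun h => hnuv (h ▸ h1)
  have huv : u ≠ v := hne u v hu hv
  have huv' : u ≠ v' := hne u v' hu hv'
  have hu'v : u' ≠ v := hne u' v hu' hv
  have hu'v' : u' ≠ v' := hne u' v' hu' hv'
  set H' := swapGraph H u u' v v' with hH'
  -- H' is bipartite
  have hbip' : ∀ a b, H'.Adj a b → (a ∈ X ∧ b ∈ Y) ∨ (a ∈ Y ∧ b ∈ X) := by
    intro a b h
    rcases h with ⟨h, _⟩ | ⟨ha, _⟩
    · exact hbip a b h
    · rcases ha with ⟨ha, hb⟩ | ⟨ha, hb⟩ | ⟨ha, hb⟩ | ⟨ha, hb⟩ <;> subst ha <;> subst hb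
      · exact Or.inl ⟨hu, hv⟩
      · exact Or.inr ⟨hv, hu⟩
      · exact Or.inl ⟨hu', hv'⟩
      · exact Or.inr ⟨hv', hu'⟩
  -- neighborhood computations
  have hNu : H'.neighborSet u = insert v (H.neighborSet u \ {v'}) := by
    ext b
    simp only [SimpleGraph.mem_neighborSet, hH', swapGraph_adj, Set.mem_insert_iff,
      Set.mem_diff, Set.mem_singleton_iff]
    unfold remP addP
    constructor
    · rintro (⟨h, hr⟩ | ⟨ha, hab⟩)
      · exact Or.inr ⟨h, fun hb => hr (by subst hb; tauto)⟩
      · rcases ha with ⟨_, hb⟩ | ⟨hau, _⟩ | ⟨hau, _⟩ | ⟨hau, _⟩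
        · exact Or.inl hb
        · exact absurd hau huv
        · exact absurd hau huu'
        · exact absurd hau huv'
    · rintro (hb | ⟨h, hb⟩)
      · subst hb; exact Or.inr ⟨by tauto, huv⟩
      · refine Or.inl ⟨h, ?_⟩
        rintro (⟨_, hb'⟩ | ⟨hau, _⟩ | ⟨hau, _⟩ | ⟨hau, _⟩)
        · exact hb hb'
        · exact huv' hau
        · exact huu' hau
        · exact huv hau
  have hNu' : H'.neighborSet u' = insert v' (H.neighborSet u' \ {v}) := by
    ext b
    simp only [SimpleGraph.mem_neighborSet, hH', swapGraph_adj, Set.mem_insert_iff,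
      Set.mem_diff, Set.mem_singleton_iff]
    unfold remP addP
    constructor
    · rintro (⟨h, hr⟩ | ⟨ha, hab⟩)
      · exact Or.inr ⟨h, fun hb => hr (by subst hb; tauto)⟩
      · rcases ha with ⟨hau, _⟩ | ⟨hau, _⟩ | ⟨_, hb⟩ | ⟨hau, _⟩
        · exact absurd hau.symm huu'
        · exact absurd hau hu'v
        · exact Or.inl hb
        · exact absurd hau hu'v'
    · rintro (hb | ⟨h, hb⟩)
      · subst hb; exact Or.inr ⟨by tauto, hu'v'⟩
      · refine Or.inl ⟨h, ?_⟩
        rintro (⟨hau, _⟩ | ⟨hau, _⟩ | ⟨_, hb'⟩ | ⟨hau, _⟩)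
        · exact huu' hau.symm
        · exact hu'v' hau
        · exact hb hb'
        · exact hu'v hau
  have hNv : H'.neighborSet v = insert u (H.neighborSet v \ {u'}) := by
    ext b
    simp only [SimpleGraph.mem_neighborSet, hH', swapGraph_adj, Set.mem_insert_iff,
      Set.mem_diff, Set.mem_singleton_iff]
    unfold remP addP
    constructor
    · rintro (⟨h, hr⟩ | ⟨ha, hab⟩)
      · exact Or.inr ⟨h, fun hb => hr (by subst hb; tauto)⟩
      · rcases ha with ⟨hau, _⟩ | ⟨_, hb⟩ | ⟨hau, _⟩ | ⟨hau, _⟩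
        · exact absurd hau huv.symm
        · exact Or.inl hb
        · exact absurd hau hu'v.symm
        · exact absurd hau hvv'
    · rintro (hb | ⟨h, hb⟩)
      · subst hb; exact Or.inr ⟨by tauto, huv.symm⟩
      · refine Or.inl ⟨h, ?_⟩
        rintro (⟨hau, _⟩ | ⟨hau, _⟩ | ⟨hau, _⟩ | ⟨_, hb'⟩)
        · exact huv hau.symm
        · exact hvv' hau
        · exact hu'v hau.symm
        · exact hb hb'
  have hNv' : H'.neighborSet v' = insert u' (H.neighborSet v' \ {u}) := by
    ext b
    simp only [SimpleGraph.mem_neighborSet, hH', swapGraph_adj, Set.mem_insert_iff,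
      Set.mem_diff, Set.mem_singleton_iff]
    unfold remP addP
    constructor
    · rintro (⟨h, hr⟩ | ⟨ha, hab⟩)
      · exact Or.inr ⟨h, fun hb => hr (by subst hb; tauto)⟩
      · rcases ha with ⟨hau, _⟩ | ⟨hau, _⟩ | ⟨hau, _⟩ | ⟨_, hb⟩
        · exact absurd hau huv'.symm
        · exact absurd hau hvv'.symm
        · exact absurd hau hu'v'.symm
        · exact Or.inl hb
    · rintro (hb | ⟨h, hb⟩)
      · subst hb; exact Or.inr ⟨by tauto, hu'v'.symm⟩
      · refine Or.inl ⟨h, ?_⟩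
        rintro (⟨hau, _⟩ | ⟨_, hb'⟩ | ⟨hau, _⟩ | ⟨hau, _⟩)
        · exact huv' hau.symm
        · exact hb hb'
        · exact hu'v' hau.symm
        · exact hvv' hau.symm
  have hNother : ∀ x, x ≠ u → x ≠ u' → x ≠ v → x ≠ v' →
      H'.neighborSet x = H.neighborSet x := by
    intro x h1 h2 h3 h4
    ext b
    simp only [SimpleGraph.mem_neighborSet, hH', swapGraph_adj]
    unfold remP addP
    constructor
    · rintro (⟨h, _⟩ | ⟨ha, _⟩)
      · exact h
      · exact absurd ha (by tauto)
    · intro h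
      exact Or.inl ⟨h, by tauto⟩
  -- degrees are preserved
  have hdeg : ∀ x, deg H' x = deg H x := by
    intro x
    by_cases hx1 : x = u
    · rw [hx1, deg, deg, hNu]; exact ncard_swap ((H.mem_neighborSet u v').mpr h1) hnuv
    by_cases hx2 : x = u'
    · rw [hx2, deg, deg, hNu']; exact ncard_swap ((H.mem_neighborSet u' v).mpr h2) hnu'v'
    by_cases hx3 : x = v
    · rw [hx3, deg, deg, hNv]
      exact ncard_swap ((H.mem_neighborSet v u').mpr h2.symm) (fun h => hnuv h.symm)
    by_cases hx4 : x = v'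
    · rw [hx4, deg, deg, hNv']
      exact ncard_swap ((H.mem_neighborSet v' u).mpr h1.symm) (fun h => hnu'v' h.symm)
    · rw [deg, deg, hNother x hx1 hx2 hx3 hx4]
  have hEq := huniq H' hbip' hdeg
  have : H'.Adj u v := Or.inr ⟨Or.inl ⟨rfl, rfl⟩, huv⟩
  rw [hEq] at this
  exact hnuv this

set_option maxHeartbeats 1000000 in
lemma cross_to_diff (hdisj : Disjoint X Y) (hunion : X ∪ Y = Set.univ)
    (hbip : ∀ u w, H.Adj u w → (u ∈ X ∧ w ∈ Y) ∨ (u ∈ Y ∧ w ∈ X))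
    (hP : Cross X Y H) : IsDifference H := by
  classical
  -- neighborhoods of vertices of X are nested
  have xnest : ∀ u ∈ X, ∀ u' ∈ X,
      H.neighborSet u ⊆ H.neighborSet u' ∨ H.neighborSet u' ⊆ H.neighborSet u := by
    intro u hu u' hu'
    by_contra hcon
    push_neg at hcon
    obtain ⟨v, hv1, hv2⟩ := Set.not_subset.mp hcon.1
    obtain ⟨v', hv1', hv2'⟩ := Set.not_subset.mp hcon.2
    rw [SimpleGraph.mem_neighborSet] at hv1 hv1'
    have hvY : v ∈ Y := by
      rcases hbip u v hv1 with ⟨_, h2⟩ | ⟨h1, _⟩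
      · exact h2
      · exact absurd h1 (Set.disjoint_left.mp hdisj hu)
    have hv'Y : v' ∈ Y := by
      rcases hbip u' v' hv1' with ⟨_, h2⟩ | ⟨h1, _⟩
      · exact h2
      · exact absurd h1 (Set.disjoint_left.mp hdisj hu')
    rcases hP u u' v' v hu hu' hv'Y hvY hv1 hv1' with h | h
    · exact hv2' h
    · exact hv2 h
  set n : ℕ := Fintype.card V + 1 with hn
  have hdlt : ∀ x, deg H x < n := by
    intro x
    have : deg H x ≤ Fintype.card V := by
      rw [deg]
      have := Set.ncard_le_ncard (Set.subset_univ (H.neighborSet x)) Set.finite_univ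
      rwa [Set.ncard_univ, Nat.card_eq_fintype_card] at this
    omega
  set c : V → ℕ := fun x =>
    if h : (H.neighborSet x).Nonempty then sInf (deg H '' H.neighborSet x) else n with hcdef
  have hc_mem : ∀ x, (H.neighborSet x).Nonempty → ∃ u0, u0 ∈ H.neighborSet x ∧ c x = deg H u0 := by
    intro x hx
    have himg : (deg H '' H.neighborSet x).Nonempty := hx.image _
    obtain ⟨u0, hu0, he⟩ := Nat.sInf_mem himg
    exact ⟨u0, hu0, by rw [hcdef]; simp only [dif_pos hx]; exact he.symm⟩
  have hc_le : ∀ x u0, u0 ∈ H.neighborSet x → c x ≤ deg H u0 := by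
    intro x u0 h
    have hne : (H.neighborSet x).Nonempty := ⟨u0, h⟩
    rw [hcdef]
    simp only [dif_pos hne]
    exact Nat.sInf_le (Set.mem_image_of_mem (deg H) h)
  have hdeg_pos : ∀ a b, H.Adj a b → 1 ≤ deg H a := by
    intro a b h
    have : 0 < (H.neighborSet a).ncard :=
      (Set.ncard_pos (Set.toFinite _)).mpr ⟨b, (H.mem_neighborSet a b).mpr h⟩
    rw [deg]
    omega
  have hc_pos : ∀ x, 1 ≤ c x := by
    intro x
    by_cases hx : (H.neighborSet x).Nonempty
    · obtain ⟨u0, hu0, he⟩ := hc_mem x hx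
      rw [he]
      exact hdeg_pos u0 x ((H.mem_neighborSet x u0).mp hu0).symm
    · rw [hcdef]; simp only [dif_neg hx]; omega
  have hc_le_n : ∀ x, c x ≤ n := by
    intro x
    by_cases hx : (H.neighborSet x).Nonempty
    · obtain ⟨u0, hu0, he⟩ := hc_mem x hx
      rw [he]; exact le_of_lt (hdlt u0)
    · rw [hcdef]; simp only [dif_neg hx]; exact le_rfl
  -- the key characterization
  have key : ∀ a ∈ X, ∀ b ∈ Y, (H.Adj a b ↔ c b ≤ deg H a) := by
    intro a ha b hb
    constructor
    · intro h
      exact hc_le b a ((H.mem_neighborSet b a).mpr h.symm)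
    · intro hle
      by_cases hne : (H.neighborSet b).Nonempty
      · obtain ⟨u0, hu0, he⟩ := hc_mem b hne
        rw [SimpleGraph.mem_neighborSet] at hu0
        have hu0X : u0 ∈ X := by
          rcases hbip b u0 hu0 with ⟨h1, _⟩ | ⟨_, h2⟩
          · exact absurd hb (Set.disjoint_left.mp hdisj h1)
          · exact h2
        rcases xnest u0 hu0X a ha with hsub | hsub
        · exact (H.mem_neighborSet a b).mp (hsub ((H.mem_neighborSet u0 b).mpr hu0.symm))
        · have hcard : (H.neighborSet u0).ncard ≤ (H.neighborSet a).ncard := by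
            rw [← deg, ← deg, ← he]; exact hle
          have heq := Set.eq_of_subset_of_ncard_le hsub hcard (Set.toFinite _)
          have hb' : b ∈ H.neighborSet u0 := (H.mem_neighborSet u0 b).mpr hu0.symm
          rw [← SimpleGraph.mem_neighborSet, heq]
          exact hb'
      · exfalso
        have : c b = n := by rw [hcdef]; simp only [dif_neg hne]
        have := hdlt a
        omega
  -- the weight function: t = n, w = deg on X, c - n on Y
  refine ⟨(n:ℝ), fun x => if x ∈ X then (deg H x : ℝ) else (c x : ℝ) - n, ?_, ?_⟩
  · intro x
    by_cases hx : x ∈ X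
    · simp only [if_pos hx]
      rw [abs_le]
      have h1 : (0:ℝ) ≤ (deg H x:ℝ) := by positivity
      have h2 : (deg H x:ℝ) < (n:ℝ) := by exact_mod_cast hdlt x
      constructor <;> linarith [Nat.cast_nonneg (α := ℝ) n]
    · simp only [if_neg hx]
      rw [abs_le]
      have h1 : (1:ℝ) ≤ (c x:ℝ) := by exact_mod_cast hc_pos x
      have h2 : (c x:ℝ) ≤ (n:ℝ) := by exact_mod_cast hc_le_n x
      have h3 : (1:ℝ) ≤ (n:ℝ) := by
        have : 1 ≤ n := by omega
        exact_mod_cast this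
      constructor <;> linarith
  · intro a b hab
    by_cases ha : a ∈ X <;> by_cases hb : b ∈ X
    · simp only [if_pos ha, if_pos hb]
      refine iff_of_false (no_inner_X hdisj hbip ha hb) ?_
      rw [not_le, abs_lt]
      have h1 : (deg H a:ℝ) < (n:ℝ) := by exact_mod_cast hdlt a
      have h2 : (deg H b:ℝ) < (n:ℝ) := by exact_mod_cast hdlt b
      have h3 : (0:ℝ) ≤ (deg H a:ℝ) := by positivity
      have h4 : (0:ℝ) ≤ (deg H b:ℝ) := by positivity
      constructor <;> linarith
    · -- a ∈ X, b ∈ Y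
      have hbY : b ∈ Y := by
        rcases (hunion ▸ Set.mem_univ b : b ∈ X ∪ Y) with h | h
        · exact absurd h hb
        · exact h
      simp only [if_pos ha, if_neg hb]
      rw [key a ha b hbY]
      have h1 : (0:ℝ) ≤ (deg H a:ℝ) := by positivity
      have h2 : (c b:ℝ) ≤ (n:ℝ) := by exact_mod_cast hc_le_n b
      have hnonneg : (0:ℝ) ≤ (deg H a:ℝ) - ((c b:ℝ) - n) := by linarith
      rw [abs_of_nonneg hnonneg]
      constructor
      · intro h
        have : (c b:ℝ) ≤ (deg H a:ℝ) := by exact_mod_cast h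
        linarith
      · intro h
        have : (c b:ℝ) ≤ (deg H a:ℝ) := by linarith
        exact_mod_cast this
    · -- a ∈ Y, b ∈ X
      have haY : a ∈ Y := by
        rcases (hunion ▸ Set.mem_univ a : a ∈ X ∪ Y) with h | h
        · exact absurd h ha
        · exact h
      simp only [if_neg ha, if_pos hb]
      rw [H.adj_comm a b, key b hb a haY]
      have h1 : (0:ℝ) ≤ (deg H b:ℝ) := by positivity
      have h2 : (c a:ℝ) ≤ (n:ℝ) := by exact_mod_cast hc_le_n a
      have hnonpos : (c a:ℝ) - n - (deg H b:ℝ) ≤ 0 := by linarith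
      rw [abs_of_nonpos hnonpos]
      constructor
      · intro h
        have : (c a:ℝ) ≤ (deg H b:ℝ) := by exact_mod_cast h
        linarith
      · intro h
        have : (c a:ℝ) ≤ (deg H b:ℝ) := by linarith
        exact_mod_cast this
    · -- both in Y
      have haY : a ∈ Y := by
        rcases (hunion ▸ Set.mem_univ a : a ∈ X ∪ Y) with h | h
        · exact absurd h ha
        · exact h
      have hbY : b ∈ Y := by
        rcases (hunion ▸ Set.mem_univ b : b ∈ X ∪ Y) with h | h
        · exact absurd h hb
        · exact h
      simp only [if_neg ha, if_neg hb]
      refine iff_of_false (no_inner_Y hdisj hbip haY hbY) ?_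
      rw [not_le, abs_lt]
      have h1 : (1:ℝ) ≤ (c a:ℝ) := by exact_mod_cast hc_pos a
      have h2 : (c a:ℝ) ≤ (n:ℝ) := by exact_mod_cast hc_le_n a
      have h3 : (1:ℝ) ≤ (c b:ℝ) := by exact_mod_cast hc_pos b
      have h4 : (c b:ℝ) ≤ (n:ℝ) := by exact_mod_cast hc_le_n b
      constructor <;> · simp only [sub_sub_sub_cancel_right]; linarith

end aux

/-- A bipartitioned graph `H` with partite sets `X` and `Y` is a difference graph iff
`H` is the only bipartite graph with partite sets `X` and `Y` in which every vertex
has its given degree. -/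
theorem stmt15 {V : Type*} [Fintype V] (X Y : Set V)
    (hdisj : Disjoint X Y) (hunion : X ∪ Y = Set.univ)
    (H : SimpleGraph V)
    (hbip : ∀ u w, H.Adj u w → (u ∈ X ∧ w ∈ Y) ∨ (u ∈ Y ∧ w ∈ X)) :
    IsDifference H ↔
      ∀ H' : SimpleGraph V,
        (∀ u w, H'.Adj u w → (u ∈ X ∧ w ∈ Y) ∨ (u ∈ Y ∧ w ∈ X)) →
        (∀ v, deg H' v = deg H v) → H' = H := by
  constructor
  · intro hd
    exact cross_to_unique hdisj hunion hbip (diff_to_cross hdisj hbip hd)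
  · intro huniq
    exact cross_to_diff hdisj hunion hbip (unique_to_cross hdisj hbip huniq)
end
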